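/- arXiv:1804.08544 — 3 statements merged into one kernel-verified Lean document; each statement's English description precedes it below -/
import Mathlib

section
/- Under the homotopy CGM for affinely constrained problems with exact linear minimization oracle, for every k ≥ 1 the iterate x_{k+1} satisfies the smoothed-gap bound F_{β_k}(x_{k+1}) − f⋆ ≤ 2 D² ( L_f/(k+1) + ‖A‖²/(β₀ √(k+1)) ). -/
open RealInnerProductSpace Set

lemma cgm_sqrt1 (M : ℝ) (hM : 1 ≤ M) :
    (M - 2) * Real.sqrt (M + 1 + 1) ≤ M * Real.sqrt (M + 1) := by
  have hc1 : Real.sqrt (M+1) ^ 2 = M+1 := Real.sq_sqrt (by linarith)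
  have hc2 : Real.sqrt (M+1+1) ^ 2 = M+1+1 := Real.sq_sqrt (by linarith)
  have hc1pos : 0 < Real.sqrt (M+1) := Real.sqrt_pos.2 (by linarith)
  have hc2pos : 0 < Real.sqrt (M+1+1) := Real.sqrt_pos.2 (by linarith)
  rcases le_or_gt M 2 with hM2 | hM2
  · have h1 : (M-2) * Real.sqrt (M+1+1) ≤ 0 :=
      mul_nonpos_of_nonpos_of_nonneg (by linarith) hc2pos.le
    have h2 : 0 ≤ M * Real.sqrt (M+1) := by positivity
    linarith
  · have hs : ((M-2) * Real.sqrt (M+1+1))^2 ≤ (M * Real.sqrt (M+1))^2 := by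
      rw [mul_pow, mul_pow, hc1, hc2]
      nlinarith [sq_nonneg M, sq_nonneg (M-2)]
    have hpos : 0 < M * Real.sqrt (M+1) + (M-2) * Real.sqrt (M+1+1) := by
      have h3 := mul_pos (by linarith : (0:ℝ) < M - 2) hc2pos
      have h4 := mul_pos (by linarith : (0:ℝ) < M) hc1pos
      linarith
    nlinarith [hs, hpos]

lemma cgm_sqrt2 (M : ℝ) (hM : 1 ≤ M) :
    M * Real.sqrt (M + 1 + 1) ≤ (M + 1) * Real.sqrt (M + 1) := by
  have hc1 : Real.sqrt (M+1) ^ 2 = M+1 := Real.sq_sqrt (by linarith)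
  have hc2 : Real.sqrt (M+1+1) ^ 2 = M+1+1 := Real.sq_sqrt (by linarith)
  have hc1pos : 0 < Real.sqrt (M+1) := Real.sqrt_pos.2 (by linarith)
  have hc2pos : 0 < Real.sqrt (M+1+1) := Real.sqrt_pos.2 (by linarith)
  have hs : (M * Real.sqrt (M+1+1))^2 ≤ ((M+1) * Real.sqrt (M+1))^2 := by
    rw [mul_pow, mul_pow, hc1, hc2]
    nlinarith [sq_nonneg M]
  have hpos : 0 < M * Real.sqrt (M+1+1) + (M+1) * Real.sqrt (M+1) := by positivity
  nlinarith [hs, hpos]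

section AuxCGM
variable {E : Type*} [NormedAddCommGroup E] [InnerProductSpace ℝ E] [CompleteSpace E]
variable {F : Type*} [NormedAddCommGroup F] [InnerProductSpace ℝ F] [CompleteSpace F]



lemma cgm_line_hasDerivAt (f : E → ℝ) (f' : E → E) (hf : ∀ u, HasGradientAt f (f' u) u)
    (x w : E) (t : ℝ) :
    HasDerivAt (fun t : ℝ => f (x + t • w)) ⟪f' (x + t • w), w⟫ t := by
  have h1 : HasDerivAt (fun t : ℝ => x + t • w) w t := by
    simpa using ((hasDerivAt_id t).smul_const w).const_add x
  have h2 := (hf (x + t • w)).hasFDerivAt.comp_hasDerivAt t h1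
  simpa [InnerProductSpace.toDual_apply_apply, Function.comp_def] using h2

lemma cgm_descent (f : E → ℝ) (f' : E → E) (L : ℝ) (hL : 0 ≤ L)
    (hf : ∀ u, HasGradientAt f (f' u) u)
    (hlip : ∀ p q, ‖f' p - f' q‖ ≤ L * ‖p - q‖) (x y : E) :
    f y ≤ f x + ⟪f' x, y - x⟫ + L / 2 * ‖y - x‖ ^ 2 := by
  set w := y - x with hw
  set φ : ℝ → ℝ := fun t => f (x + t • w) - t * ⟪f' x, w⟫ - L * t ^ 2 / 2 * ‖w‖ ^ 2 with hφ
  have hψ : ∀ t : ℝ, HasDerivAt φ (⟪f' (x + t • w), w⟫ - ⟪f' x, w⟫ - L * t * ‖w‖ ^ 2) t := by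
    intro t
    have h1 := cgm_line_hasDerivAt f f' hf x w t
    have h2 : HasDerivAt (fun t : ℝ => t * ⟪f' x, w⟫) ⟪f' x, w⟫ t := by
      simpa using (hasDerivAt_id t).mul_const ⟪f' x, w⟫
    have h3 : HasDerivAt (fun t : ℝ => L * t ^ 2 / 2 * ‖w‖ ^ 2) (L * t * ‖w‖ ^ 2) t := by
      have := (hasDerivAt_pow 2 t).const_mul L
      have h4 := (this.div_const 2).mul_const (‖w‖ ^ 2)
      refine h4.congr_deriv ?_
      simp only [Nat.cast_ofNat, Nat.add_one_sub_one, pow_one]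
      ring
    exact (h1.sub h2).sub h3
  have hmono : AntitoneOn φ (Icc (0:ℝ) 1) := by
    apply antitoneOn_of_deriv_nonpos (convex_Icc 0 1)
    · exact fun t _ => ((hψ t).continuousAt).continuousWithinAt
    · intro t ht
      exact ((hψ t).differentiableAt).differentiableWithinAt
    · intro t ht
      rw [interior_Icc] at ht
      rw [(hψ t).deriv]
      have hsub : ⟪f' (x + t • w), w⟫ - ⟪f' x, w⟫ = ⟪f' (x + t • w) - f' x, w⟫ := by
        rw [inner_sub_left]
      rw [hsub]
      have h5 : ⟪f' (x + t • w) - f' x, w⟫ ≤ ‖f' (x + t • w) - f' x‖ * ‖w‖ :=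
        real_inner_le_norm _ _
      have h6 : ‖f' (x + t • w) - f' x‖ ≤ L * ‖t • w‖ := by
        simpa using hlip (x + t • w) x
      have h7 : ‖t • w‖ = t * ‖w‖ := by
        rw [norm_smul, Real.norm_eq_abs, abs_of_pos ht.1]
      have h8 : ‖f' (x + t • w) - f' x‖ * ‖w‖ ≤ L * t * ‖w‖ ^ 2 := by
        rw [h7] at h6
        calc ‖f' (x + t • w) - f' x‖ * ‖w‖ ≤ L * (t * ‖w‖) * ‖w‖ :=
              mul_le_mul_of_nonneg_right h6 (norm_nonneg w)
          _ = L * t * ‖w‖ ^ 2 := by ring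
      linarith
  have := hmono (Set.left_mem_Icc.2 zero_le_one) (Set.right_mem_Icc.2 zero_le_one) zero_le_one
  have hxy : x + (1:ℝ) • w = y := by simp [hw]
  simp only [hφ, hxy, one_pow, mul_one, one_mul] at this
  simp only [zero_pow, zero_smul, add_zero, zero_mul, mul_zero] at this
  linarith [this]

lemma cgm_convex_grad (f : E → ℝ) (f' : E → E) (hcvx : ConvexOn ℝ Set.univ f)
    (hf : ∀ u, HasGradientAt f (f' u) u) (x u : E) :
    f x + ⟪f' x, u - x⟫ ≤ f u := by
  set w := u - x with hw
  have hline : HasDerivAt (fun t : ℝ => f (x + t • w)) ⟪f' x, w⟫ 0 := by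
    have := cgm_line_hasDerivAt f f' hf x w 0
    simpa using this
  rw [hasDerivAt_iff_tendsto_slope] at hline
  have h2 : Filter.Tendsto (slope (fun t : ℝ => f (x + t • w)) 0) (nhdsWithin 0 (Set.Ioi 0))
      (nhds ⟪f' x, w⟫) :=
    hline.mono_left (nhdsWithin_mono _ (fun t ht => ne_of_gt ht))
  have h3 : ⟪f' x, w⟫ ≤ f u - f x := by
    refine le_of_tendsto h2 ?_
    filter_upwards [Ioc_mem_nhdsGT_of_mem (Set.left_mem_Ico.2 one_pos)] with t ht
    have ht0 : 0 < t := ht.1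
    have hcomb : x + t • w = (1 - t) • x + t • u := by
      simp only [hw]; module
    have hcv := hcvx.2 (Set.mem_univ x) (Set.mem_univ u) (by linarith [ht.2] : (0:ℝ) ≤ 1 - t)
      (le_of_lt ht0) (by ring)
    rw [← hcomb] at hcv
    simp only [smul_eq_mul] at hcv
    rw [slope_def_field]
    simp only [zero_smul, add_zero, sub_zero]
    rw [div_le_iff₀ ht0]
    calc f (x + t • w) - f x ≤ (1 - t) * f x + t * f u - f x := by linarith [hcv]
      _ = (f u - f x) * t := by ring
  linarith [h3]



lemma cgm_step (f : E → ℝ) (f' : E → E) (L_f : ℝ) (hLf : 0 ≤ L_f)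
    (hdesc : ∀ p q, f q ≤ f p + ⟪f' p, q - p⟫ + L_f / 2 * ‖q - p‖ ^ 2)
    (hcvx : ∀ p q, f p + ⟪f' p, q - p⟫ ≤ f q)
    (A : E →L[ℝ] F) (projK : F → F)
    (hKdesc : ∀ z w : F, ‖w - projK w‖ ^ 2
      ≤ ‖z - projK z‖ ^ 2 + 2 * ⟪z - projK z, w - z⟫ + ‖w - z‖ ^ 2)
    (b η D : ℝ) (hb : 0 < b) (hη0 : 0 ≤ η) (hD0 : 0 ≤ D)
    (u sk xst : E) (hDd : ‖sk - u‖ ≤ D)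
    (hlmo : ⟪b • f' u + (ContinuousLinearMap.adjoint A) (A u - projK (A u)), sk⟫
          ≤ ⟪b • f' u + (ContinuousLinearMap.adjoint A) (A u - projK (A u)), xst⟫)
    (hfeas : ⟪A u - projK (A u), A xst - A u⟫ ≤ -‖A u - projK (A u)‖ ^ 2) :
    f (u + η • (sk - u)) + ‖A (u + η • (sk - u)) - projK (A (u + η • (sk - u)))‖ ^ 2 / (2 * b)
      ≤ f u + η * (f xst - f u) + (1 - 2 * η) * ‖A u - projK (A u)‖ ^ 2 / (2 * b)
        + (L_f + ‖A‖ ^ 2 / b) * η ^ 2 * D ^ 2 / 2 := by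
  set up := u + η • (sk - u) with hu
  set dd := A u - projK (A u) with hdd
  have hdiff : up - u = η • (sk - u) := by rw [hu]; abel
  have hAdiff : A up - A u = η • (A sk - A u) := by
    rw [hu]; rw [map_add, map_smul, map_sub]; abel
  -- P1
  have P1 : f up ≤ f u + η * ⟪f' u, sk - u⟫ + L_f / 2 * (η ^ 2 * ‖sk - u‖ ^ 2) := by
    have h := hdesc u up
    rw [hdiff] at h
    rw [real_inner_smul_right] at h
    have hn : ‖η • (sk - u)‖ ^ 2 = η ^ 2 * ‖sk - u‖ ^ 2 := by
      rw [norm_smul, Real.norm_eq_abs, mul_pow, sq_abs]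
    rw [hn] at h
    exact h
  -- P2
  have P2 : ‖A up - projK (A up)‖ ^ 2
      ≤ ‖dd‖ ^ 2 + 2 * (η * ⟪dd, A sk - A u⟫) + η ^ 2 * ‖A sk - A u‖ ^ 2 := by
    have h := hKdesc (A u) (A up)
    have e1 : A up - A u = η • (A sk - A u) := hAdiff
    rw [e1, real_inner_smul_right] at h
    have hn : ‖η • (A sk - A u)‖ ^ 2 = η ^ 2 * ‖A sk - A u‖ ^ 2 := by
      rw [norm_smul, Real.norm_eq_abs, mul_pow, sq_abs]
    rw [hn] at h
    exact h
  -- P3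
  have P3 : b * ⟪f' u, sk - u⟫ + ⟪dd, A sk - A u⟫ ≤ b * (f xst - f u) - ‖dd‖ ^ 2 := by
    have e1 : ∀ z : E, ⟪b • f' u + (ContinuousLinearMap.adjoint A) dd, z⟫
        = b * ⟪f' u, z⟫ + ⟪dd, A z⟫ := by
      intro z
      rw [inner_add_left, real_inner_smul_left, ContinuousLinearMap.adjoint_inner_left]
    have e2 : b * ⟪f' u, sk - u⟫ + ⟪dd, A sk - A u⟫
        ≤ b * ⟪f' u, xst - u⟫ + ⟪dd, A xst - A u⟫ := by
      have h3 : ⟪b • f' u + (ContinuousLinearMap.adjoint A) dd, sk - u⟫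
          ≤ ⟪b • f' u + (ContinuousLinearMap.adjoint A) dd, xst - u⟫ := by
        rw [inner_sub_right, inner_sub_right]
        exact sub_le_sub_right hlmo _
      rw [e1, e1, map_sub, map_sub] at h3
      exact h3
    have e3 : b * ⟪f' u, xst - u⟫ ≤ b * (f xst - f u) := by
      have := hcvx u xst
      have h4 : ⟪f' u, xst - u⟫ ≤ f xst - f u := by linarith
      exact mul_le_mul_of_nonneg_left h4 (le_of_lt hb)
    linarith [hfeas, e2, e3]
  -- P4, P5
  have P4 : ‖sk - u‖ ^ 2 ≤ D ^ 2 := pow_le_pow_left₀ (norm_nonneg _) hDd 2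
  have P5 : ‖A sk - A u‖ ^ 2 ≤ ‖A‖ ^ 2 * D ^ 2 := by
    have h1 : ‖A sk - A u‖ ≤ ‖A‖ * D := by
      rw [← map_sub]
      calc ‖A (sk - u)‖ ≤ ‖A‖ * ‖sk - u‖ := A.le_opNorm _
        _ ≤ ‖A‖ * D := mul_le_mul_of_nonneg_left hDd (norm_nonneg A)
    calc ‖A sk - A u‖ ^ 2 ≤ (‖A‖ * D) ^ 2 := pow_le_pow_left₀ (norm_nonneg _) h1 2
      _ = ‖A‖ ^ 2 * D ^ 2 := by ring
  have h2b : (0:ℝ) < 2 * b := by linarith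
  -- multiplied key inequality
  have hkey : 2 * b * f up + ‖A up - projK (A up)‖ ^ 2
      ≤ 2 * b * (f u + η * (f xst - f u)) + (1 - 2 * η) * ‖dd‖ ^ 2
        + (L_f * b + ‖A‖ ^ 2) * η ^ 2 * D ^ 2 := by
    have q1 := mul_le_mul_of_nonneg_left P1 (le_of_lt h2b)
    have q3 := mul_le_mul_of_nonneg_left P3 (by linarith : (0:ℝ) ≤ 2 * η)
    have q4 := mul_le_mul_of_nonneg_left P4 (by positivity : (0:ℝ) ≤ b * L_f * η ^ 2)
    have q5 := mul_le_mul_of_nonneg_left P5 (by positivity : (0:ℝ) ≤ η ^ 2)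
    nlinarith [q1, q3, q4, q5, P2]
  -- divide back
  have lhs_eq : f up + ‖A up - projK (A up)‖ ^ 2 / (2 * b)
      = (2 * b * f up + ‖A up - projK (A up)‖ ^ 2) / (2 * b) := by
    field_simp
  have rhs_eq : f u + η * (f xst - f u) + (1 - 2 * η) * ‖dd‖ ^ 2 / (2 * b)
        + (L_f + ‖A‖ ^ 2 / b) * η ^ 2 * D ^ 2 / 2
      = (2 * b * (f u + η * (f xst - f u)) + (1 - 2 * η) * ‖dd‖ ^ 2
        + (L_f * b + ‖A‖ ^ 2) * η ^ 2 * D ^ 2) / (2 * b) := by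
    field_simp
  rw [lhs_eq, rhs_eq]
  exact (div_le_div_iff_of_pos_right h2b).2 hkey
end AuxCGM

set_option maxHeartbeats 1000000 in
theorem stmt1
    (n d : ℕ)
    (X : Set (EuclideanSpace ℝ (Fin n)))
    (hX_ne : X.Nonempty) (hX_cpt : IsCompact X) (hX_cvx : Convex ℝ X)
    (f : EuclideanSpace ℝ (Fin n) → ℝ)
    (f' : EuclideanSpace ℝ (Fin n) → EuclideanSpace ℝ (Fin n))
    (hf_cvx : ConvexOn ℝ Set.univ f)
    (hf_grad : ∀ x, HasGradientAt f (f' x) x)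
    (L_f : ℝ) (hLf : 0 ≤ L_f)
    (hf'_lip : ∀ x y, ‖f' x - f' y‖ ≤ L_f * ‖x - y‖)
    (A : EuclideanSpace ℝ (Fin n) →L[ℝ] EuclideanSpace ℝ (Fin d))
    (K : Set (EuclideanSpace ℝ (Fin d)))
    (hK_ne : K.Nonempty) (hK_cl : IsClosed K) (hK_cvx : Convex ℝ K)
    (projK : EuclideanSpace ℝ (Fin d) → EuclideanSpace ℝ (Fin d))
    (hprojK : ∀ z, projK z ∈ K ∧ ∀ y ∈ K, dist z (projK z) ≤ dist z y)
    (fstar : ℝ)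
    (hfstar : IsLeast (f '' {x | x ∈ X ∧ A x ∈ K}) fstar)
    (β₀ : ℝ) (hβ₀ : 0 < β₀)
    (x s v : ℕ → EuclideanSpace ℝ (Fin n))
    (hx1 : x 1 ∈ X)
    (hv : ∀ k, 1 ≤ k → v k = (β₀ / Real.sqrt ((k:ℝ) + 1)) • f' (x k)
        + (ContinuousLinearMap.adjoint A) (A (x k) - projK (A (x k))))
    (hs_mem : ∀ k, 1 ≤ k → s k ∈ X)
    (hlmo : ∀ k, 1 ≤ k → ∀ z ∈ X, ⟪v k, s k⟫ ≤ ⟪v k, z⟫)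
    (hupd : ∀ k, 1 ≤ k → x (k + 1) = x k + (2 / ((k:ℝ) + 1)) • (s k - x k)) :
    ∀ k, 1 ≤ k →
      f (x (k + 1)) + (Metric.infDist (A (x (k + 1))) K) ^ 2 / (2 * (β₀ / Real.sqrt ((k:ℝ) + 1))) - fstar
        ≤ 2 * (Metric.diam X) ^ 2
            * (L_f / ((k:ℝ) + 1) + ‖A‖ ^ 2 / (β₀ * Real.sqrt ((k:ℝ) + 1))) := by
  obtain ⟨xst, hxstmem, hfxst⟩ := hfstar.1
  obtain ⟨hxstX, hxstK⟩ := hxstmem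
  haveI : Nonempty K := hK_ne.to_subtype
  -- projection facts
  have hprojmem : ∀ z, projK z ∈ K := fun z => (hprojK z).1
  have hchar : ∀ z, ∀ y ∈ K, ⟪z - projK z, y - projK z⟫ ≤ 0 := by
    intro z
    have hiInf : ‖z - projK z‖ = ⨅ w : K, ‖z - w‖ := by
      apply le_antisymm
      · apply le_ciInf
        rintro ⟨w, hw⟩
        simpa [dist_eq_norm] using (hprojK z).2 w hw
      · exact ciInf_le ⟨0, by rintro r ⟨w, rfl⟩; positivity⟩ (⟨projK z, hprojmem z⟩ : K)
    exact (norm_eq_iInf_iff_real_inner_le_zero hK_cvx (hprojmem z)).1 hiInf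
  have hinf : ∀ z, Metric.infDist z K = ‖z - projK z‖ := by
    intro z
    apply le_antisymm
    · simpa [dist_eq_norm] using Metric.infDist_le_dist_of_mem (hprojmem z)
    · by_contra h
      push_neg at h
      rw [← dist_eq_norm] at h
      obtain ⟨y, hy, hlt⟩ := (Metric.infDist_lt_iff hK_ne).1 h
      exact absurd ((hprojK z).2 y hy) (not_le.2 hlt)
  have hKdesc : ∀ z w : EuclideanSpace ℝ (Fin d), ‖w - projK w‖ ^ 2
      ≤ ‖z - projK z‖ ^ 2 + 2 * ⟪z - projK z, w - z⟫ + ‖w - z‖ ^ 2 := by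
    intro z w
    have h1 : ‖w - projK w‖ ≤ ‖w - projK z‖ := by
      simpa [dist_eq_norm] using (hprojK w).2 (projK z) (hprojmem z)
    have h2 : w - projK z = (z - projK z) + (w - z) := by abel
    calc ‖w - projK w‖ ^ 2 ≤ ‖w - projK z‖ ^ 2 := pow_le_pow_left₀ (norm_nonneg _) h1 2
      _ = _ := by rw [h2, norm_add_sq_real]
  have hfeas : ∀ z, ⟪z - projK z, A xst - z⟫ ≤ -‖z - projK z‖ ^ 2 := by
    intro z
    have h1 := hchar z (A xst) hxstK
    have h2 : ⟪z - projK z, A xst - z⟫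
        = ⟪z - projK z, A xst - projK z⟫ - ⟪z - projK z, z - projK z⟫ := by
      rw [← inner_sub_right]; congr 1; abel
    rw [real_inner_self_eq_norm_sq] at h2
    linarith
  -- diameter facts
  have hD0 : 0 ≤ Metric.diam X := Metric.diam_nonneg
  have hdiam : ∀ a ∈ X, ∀ c ∈ X, ‖a - c‖ ≤ Metric.diam X := fun a ha c hc => by
    rw [← dist_eq_norm]; exact Metric.dist_le_diam_of_mem hX_cpt.isBounded ha hc
  -- membership
  have hxmem : ∀ k, 1 ≤ k → x k ∈ X := by
    intro k hk
    induction k with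
    | zero => omega
    | succ m ih =>
      by_cases hm : 1 ≤ m
      · have hxm := ih hm
        rw [hupd m hm]
        have hm1 : (1:ℝ) ≤ (m:ℝ) := by exact_mod_cast hm
        have hcomb : x m + (2/((m:ℝ)+1)) • (s m - x m)
            = (1 - 2/((m:ℝ)+1)) • x m + (2/((m:ℝ)+1)) • s m := by module
        rw [hcomb]
        refine hX_cvx hxm (hs_mem m hm) ?_ (by positivity) (by ring)
        rw [sub_nonneg, div_le_one (by linarith)]
        linarith
      · have hm0 : m = 0 := by omega
        subst hm0
        exact hx1
  have hdesc : ∀ p q, f q ≤ f p + ⟪f' p, q - p⟫ + L_f / 2 * ‖q - p‖ ^ 2 :=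
    fun p q => cgm_descent f f' L_f hLf hf_grad hf'_lip p q
  have hcvx' : ∀ p q, f p + ⟪f' p, q - p⟫ ≤ f q :=
    fun p q => cgm_convex_grad f f' hf_cvx hf_grad p q
  -- per-step inequality
  have key : ∀ k, 1 ≤ k →
      f (x (k+1)) + ‖A (x (k+1)) - projK (A (x (k+1)))‖ ^ 2 / (2 * (β₀ / Real.sqrt ((k:ℝ)+1)))
        ≤ f (x k) + (2/((k:ℝ)+1)) * (fstar - f (x k))
          + (1 - 2*(2/((k:ℝ)+1))) * ‖A (x k) - projK (A (x k))‖ ^ 2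
              / (2 * (β₀ / Real.sqrt ((k:ℝ)+1)))
          + (L_f + ‖A‖ ^ 2 / (β₀ / Real.sqrt ((k:ℝ)+1))) * (2/((k:ℝ)+1)) ^ 2
              * (Metric.diam X) ^ 2 / 2 := by
    intro k hk
    have hk1 : (1:ℝ) ≤ (k:ℝ) := by exact_mod_cast hk
    have hsq : 0 < Real.sqrt ((k:ℝ)+1) := Real.sqrt_pos.2 (by linarith)
    have hb : 0 < β₀ / Real.sqrt ((k:ℝ)+1) := by positivity
    have hη0 : (0:ℝ) ≤ 2/((k:ℝ)+1) := by positivity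
    have hlmo' := hlmo k hk xst hxstX
    rw [hv k hk] at hlmo'
    have happ := cgm_step f f' L_f hLf hdesc hcvx' A projK hKdesc
      (β₀ / Real.sqrt ((k:ℝ)+1)) (2/((k:ℝ)+1)) (Metric.diam X) hb hη0 hD0
      (x k) (s k) xst (hdiam _ (hs_mem k hk) _ (hxmem k hk)) hlmo' (hfeas (A (x k)))
    rw [← hupd k hk, hfxst] at happ
    exact happ
  -- main induction
  simp only [hinf]
  intro k hk
  induction k, hk using Nat.le_induction with
  | base =>
    have h := key 1 le_rfl
    simp only [Nat.cast_one] at h ⊢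
    obtain ⟨S2, hS2def⟩ : ∃ t, Real.sqrt ((1:ℝ)+1) = t := ⟨_, rfl⟩
    have hS2 : S2 ^ 2 = (1:ℝ)+1 := by rw [← hS2def]; exact Real.sq_sqrt (by norm_num)
    have hS2pos : 0 < S2 := by rw [← hS2def]; exact Real.sqrt_pos.2 (by norm_num)
    simp only [hS2def] at h ⊢
    have hnn : 0 ≤ ‖A (x 1) - projK (A (x 1))‖ ^ 2
        / (2 * (β₀ / S2)) := by positivity
    have hbase : (L_f + ‖A‖ ^ 2 / (β₀ / S2)) * (2/((1:ℝ)+1)) ^ 2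
          * (Metric.diam X) ^ 2 / 2
        ≤ 2 * (Metric.diam X) ^ 2
          * (L_f / ((1:ℝ)+1) + ‖A‖ ^ 2 / (β₀ * S2)) := by
      rw [← sub_nonneg]
      have heq : 2 * (Metric.diam X) ^ 2
            * (L_f / ((1:ℝ)+1) + ‖A‖ ^ 2 / (β₀ * S2))
          - (L_f + ‖A‖ ^ 2 / (β₀ / S2)) * (2/((1:ℝ)+1)) ^ 2
            * (Metric.diam X) ^ 2 / 2
          = (Metric.diam X) ^ 2 * L_f / 2
            + (Metric.diam X) ^ 2 * ‖A‖ ^ 2 * (4 - S2 ^ 2)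
              / (2 * β₀ * S2) := by
        have hne : S2 ≠ 0 := ne_of_gt hS2pos
        field_simp
        ring
      rw [heq]
      have h4 : (4:ℝ) - S2 ^ 2 = 2 := by rw [hS2]; norm_num
      rw [h4]
      positivity
    ring_nf at h hnn hbase ⊢
    simp only [inv_inv] at h hnn hbase ⊢
    linarith [h, hnn, hbase]
  | succ m hm ih =>
    have hM1 : (1:ℝ) ≤ (m:ℝ) := by exact_mod_cast hm
    have hcast : (((m+1:ℕ)):ℝ) = (m:ℝ)+1 := by push_cast; ring
    have h := key (m+1) (by omega)
    rw [hcast] at h ⊢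
    obtain ⟨c1, hc1def⟩ : ∃ t, Real.sqrt ((m:ℝ)+1) = t := ⟨_, rfl⟩
    obtain ⟨c2, hc2def⟩ : ∃ t, Real.sqrt ((m:ℝ)+1+1) = t := ⟨_, rfl⟩
    have hc1 : c1 ^ 2 = (m:ℝ)+1 := by rw [← hc1def]; exact Real.sq_sqrt (by linarith)
    have hc2 : c2 ^ 2 = (m:ℝ)+1+1 := by rw [← hc2def]; exact Real.sq_sqrt (by linarith)
    have hc1pos : 0 < c1 := by rw [← hc1def]; exact Real.sqrt_pos.2 (by linarith)
    have hc2pos : 0 < c2 := by rw [← hc2def]; exact Real.sqrt_pos.2 (by linarith)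
    have hkey2 := cgm_sqrt1 (m:ℝ) hM1
    have hkey3 := cgm_sqrt2 (m:ℝ) hM1
    simp only [hc1def, hc2def] at h ih hkey2 hkey3 ⊢
    -- beta-shift coefficient inequality
    have hcc : (1 - 2*(2/((m:ℝ)+1+1))) / (2*(β₀ / c2))
        ≤ (1 - 2/((m:ℝ)+1+1)) / (2*(β₀ / c1)) := by
      rw [← sub_nonneg]
      have heqc : (1 - 2/((m:ℝ)+1+1)) / (2*(β₀ / c1))
            - (1 - 2*(2/((m:ℝ)+1+1))) / (2*(β₀ / c2))
          = ((m:ℝ) * c1 - ((m:ℝ)-2) * c2)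
              / (2 * β₀ * ((m:ℝ)+1+1)) := by
        field_simp
        ring
      rw [heqc]
      apply div_nonneg (by linarith) (by positivity)
    have hcoefN := mul_le_mul_of_nonneg_right hcc
      (sq_nonneg ‖A (x (m+1)) - projK (A (x (m+1)))‖)
    -- scaled induction hypothesis
    have h1η : (0:ℝ) ≤ 1 - 2/((m:ℝ)+1+1) := by
      rw [sub_nonneg, div_le_one (by linarith)]; linarith
    have hIH2 := mul_le_mul_of_nonneg_left ih h1η
    -- recursion arithmetic, L_f part
    have hL : (1 - 2/((m:ℝ)+1+1))*(2/((m:ℝ)+1)) + (2/((m:ℝ)+1+1))^2/2 ≤ 2/((m:ℝ)+1+1) := by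
      rw [← sub_nonneg]
      have heq : 2/((m:ℝ)+1+1)
            - ((1 - 2/((m:ℝ)+1+1))*(2/((m:ℝ)+1)) + (2/((m:ℝ)+1+1))^2/2)
          = 2/(((m:ℝ)+1)*((m:ℝ)+1+1)^2) := by
        field_simp
        ring
      rw [heq]; positivity
    -- recursion arithmetic, ‖A‖² part
    have hQ : (1 - 2/((m:ℝ)+1+1))*(2/(β₀ * c1))
          + (c2/β₀)*(2/((m:ℝ)+1+1))^2/2
        ≤ 2/(β₀ * c2) := by
      rw [← sub_nonneg]
      have heq : 2/(β₀ * c2)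
            - ((1 - 2/((m:ℝ)+1+1))*(2/(β₀ * c1))
              + (c2/β₀)*(2/((m:ℝ)+1+1))^2/2)
          = 2*(((m:ℝ)+1+1)^2 * c1
              - (m:ℝ)*((m:ℝ)+1+1) * c2
              - c1 * c2 ^ 2)
            / (β₀ * c1 * c2 * ((m:ℝ)+1+1)^2) := by
        field_simp
        ring
      rw [heq]
      apply div_nonneg ?_ (by positivity)
      have hnum : ((m:ℝ)+1+1)^2 * c1
            - (m:ℝ)*((m:ℝ)+1+1) * c2
            - c1 * c2 ^ 2
          = ((m:ℝ)+1+1) * (((m:ℝ)+1) * c1 - (m:ℝ) * c2) := by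
        rw [hc2]; ring
      rw [hnum]
      have h5 : 0 ≤ ((m:ℝ)+1) * c1 - (m:ℝ) * c2 := by
        linarith
      have h6 : (0:ℝ) ≤ (m:ℝ)+1+1 := by linarith
      exact mul_nonneg (by norm_num) (mul_nonneg h6 h5)
    have qL := mul_le_mul_of_nonneg_left hL
      (by positivity : (0:ℝ) ≤ L_f * (Metric.diam X)^2)
    have qQ := mul_le_mul_of_nonneg_left hQ
      (by positivity : (0:ℝ) ≤ ‖A‖^2 * (Metric.diam X)^2)
    ring_nf at h hcoefN hIH2 qL qQ ⊢
    simp only [inv_inv] at h hcoefN hIH2 qL qQ ⊢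
    linarith [h, hcoefN, hIH2, qL, qQ]
end

section
/- Under the homotopy CGM for affinely constrained problems with exact linear minimization oracle, for every k ≥ 1 the iterate x_{k+1} satisfies the three bounds: (i) f(x_{k+1}) − f⋆ ≥ −‖y⋆‖ · dist(A x_{k+1}, K); (ii) f(x_{k+1}) − f⋆ ≤ 2 D² ( L_f/(k+1) + ‖A‖²/(β₀ √(k+1)) ); (iii) dist(A x_{k+1}, K) ≤ (2 β₀ / √(k+1)) ( ‖y⋆‖ + D √(C₀/β₀) ), where C₀ = L_f + ‖A‖²/β₀. -/
open RealInnerProductSpace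

lemma proj_var {d : ℕ} {K : Set (EuclideanSpace ℝ (Fin d))} (hK_cvx : Convex ℝ K)
    (projK : EuclideanSpace ℝ (Fin d) → EuclideanSpace ℝ (Fin d))
    (hprojK : ∀ z, projK z ∈ K ∧ ∀ y ∈ K, dist z (projK z) ≤ dist z y)
    (z : EuclideanSpace ℝ (Fin d)) {u : EuclideanSpace ℝ (Fin d)} (hu : u ∈ K) :
    ⟪z - projK z, u - projK z⟫ ≤ 0 := by
  set p := projK z with hp
  have key : ∀ t : ℝ, 0 < t → t ≤ 1 → 2 * ⟪z - p, u - p⟫ ≤ t * ‖u - p‖ ^ 2 := by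
    intro t ht ht1
    have hmem : p + t • (u - p) ∈ K := by
      have := hK_cvx (hprojK z).1 hu (by linarith : (0:ℝ) ≤ 1 - t) ht.le (by ring)
      convert this using 1
      module
    have hle := (hprojK z).2 _ hmem
    rw [dist_eq_norm, dist_eq_norm] at hle
    have h2 : z - (p + t • (u - p)) = (z - p) - t • (u - p) := by module
    rw [h2] at hle
    have hsq := mul_self_le_mul_self (norm_nonneg _) hle
    have e1 : ‖(z - p) - t • (u - p)‖ * ‖(z - p) - t • (u - p)‖
        = ‖z - p‖ * ‖z - p‖ - 2 * (t * ⟪z - p, u - p⟫) + t ^ 2 * (‖u - p‖ * ‖u - p‖) := by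
      rw [← real_inner_self_eq_norm_mul_norm, ← real_inner_self_eq_norm_mul_norm,
        ← real_inner_self_eq_norm_mul_norm]
      rw [inner_sub_sub_self]
      simp only [real_inner_smul_left, real_inner_smul_right]
      rw [real_inner_comm (u - p) (z - p)]
      ring
    rw [e1] at hsq
    have : 2 * (t * ⟪z - p, u - p⟫) ≤ t ^ 2 * (‖u - p‖ * ‖u - p‖) := by linarith
    have h4 : t * (2 * ⟪z - p, u - p⟫) ≤ t * (t * ‖u - p‖ ^ 2) := by nlinarith
    have := (mul_le_mul_iff_right₀ ht).1 h4
    linarith [this]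
  have hlim : Filter.Tendsto (fun m : ℕ => (1 / (m + 1) : ℝ) * ‖u - p‖ ^ 2) Filter.atTop (nhds 0) := by
    have := tendsto_one_div_add_atTop_nhds_zero_nat (𝕜 := ℝ)
    simpa using this.mul_const (‖u - p‖ ^ 2)
  have hev : ∀ m : ℕ, 2 * ⟪z - p, u - p⟫ ≤ (1 / (m + 1) : ℝ) * ‖u - p‖ ^ 2 := by
    intro m
    refine key _ (by positivity) ?_
    rw [div_le_one (by positivity)]
    linarith [Nat.cast_nonneg (α := ℝ) m]
  have := ge_of_tendsto hlim (Filter.Eventually.of_forall hev)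
  linarith

lemma line_hasDerivAt {n : ℕ} (f : EuclideanSpace ℝ (Fin n) → ℝ)
    (f' : EuclideanSpace ℝ (Fin n) → EuclideanSpace ℝ (Fin n))
    (hf_grad : ∀ x, HasGradientAt f (f' x) x) (a v : EuclideanSpace ℝ (Fin n)) (t : ℝ) :
    HasDerivAt (fun t : ℝ => f (a + t • v)) ⟪f' (a + t • v), v⟫ t := by
  have hc : HasDerivAt (fun t : ℝ => a + t • v) v t := by
    simpa using ((hasDerivAt_id t).smul_const v).const_add a
  have := (hf_grad (a + t • v)).hasFDerivAt.comp_hasDerivAt t hc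
  simp [InnerProductSpace.toDual_apply_apply] at this
  exact this

lemma descent_lemma {n : ℕ} (f : EuclideanSpace ℝ (Fin n) → ℝ)
    (f' : EuclideanSpace ℝ (Fin n) → EuclideanSpace ℝ (Fin n))
    (hf_grad : ∀ x, HasGradientAt f (f' x) x) (L : ℝ) (hL : 0 ≤ L)
    (hlip : ∀ x y, ‖f' x - f' y‖ ≤ L * ‖x - y‖) (a b : EuclideanSpace ℝ (Fin n)) :
    f b ≤ f a + ⟪f' a, b - a⟫ + L * ‖b - a‖ ^ 2 / 2 := by
  set v := b - a with hv
  set g : ℝ → ℝ := fun t => f (a + t • v) - t * ⟪f' a, v⟫ - L * t ^ 2 * ‖v‖ ^ 2 / 2 with hg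
  have hg' : ∀ t : ℝ, HasDerivAt g (⟪f' (a + t • v), v⟫ - ⟪f' a, v⟫ - L * (2 * t) * ‖v‖ ^ 2 / 2) t := by
    intro t
    have h1 : HasDerivAt (fun t : ℝ => t * ⟪f' a, v⟫) ⟪f' a, v⟫ t := by
      simpa using (hasDerivAt_id t).mul_const (⟪f' a, v⟫)
    have h2 : HasDerivAt (fun t : ℝ => L * t ^ 2 * ‖v‖ ^ 2 / 2) (L * (2 * t ^ 1) * ‖v‖ ^ 2 / 2) t :=
      (((hasDerivAt_pow 2 t).const_mul L).mul_const (‖v‖ ^ 2)).div_const 2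
    have := ((line_hasDerivAt f f' hf_grad a v t).sub h1).sub h2
    simp only [pow_one] at this
    exact this
  have hmono : AntitoneOn g (Set.Icc (0:ℝ) 1) := by
    apply antitoneOn_of_deriv_nonpos (convex_Icc (0:ℝ) 1)
    · have hdg : Differentiable ℝ g := fun t => (hg' t).differentiableAt
      exact hdg.continuous.continuousOn
    · intro t _
      exact ((hg' t).differentiableAt).differentiableWithinAt
    · intro t ht
      rw [interior_Icc, Set.mem_Ioo] at ht
      rw [(hg' t).deriv]
      have hb1 : ⟪f' (a + t • v), v⟫ - ⟪f' a, v⟫ = ⟪f' (a + t • v) - f' a, v⟫ := by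
        rw [inner_sub_left]
      have hb2 : ⟪f' (a + t • v) - f' a, v⟫ ≤ ‖f' (a + t • v) - f' a‖ * ‖v‖ :=
        real_inner_le_norm _ _
      have hb3 : ‖f' (a + t • v) - f' a‖ ≤ L * ‖t • v‖ := by
        have := hlip (a + t • v) a
        simpa using this
      have hb4 : ‖t • v‖ = t * ‖v‖ := by
        rw [norm_smul, Real.norm_eq_abs, abs_of_pos ht.1]
      have hchain : ⟪f' (a + t • v), v⟫ - ⟪f' a, v⟫ ≤ L * t * ‖v‖ ^ 2 := by
        rw [hb1]
        calc ⟪f' (a + t • v) - f' a, v⟫ ≤ ‖f' (a + t • v) - f' a‖ * ‖v‖ := hb2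
          _ ≤ (L * ‖t • v‖) * ‖v‖ := mul_le_mul_of_nonneg_right hb3 (norm_nonneg _)
          _ = L * t * ‖v‖ ^ 2 := by rw [hb4]; ring
      linarith
  have hle := hmono (Set.mem_Icc.2 ⟨le_refl 0, zero_le_one⟩) (Set.mem_Icc.2 ⟨zero_le_one, le_refl 1⟩) zero_le_one
  have hg0 : g 0 = f a := by simp [hg]
  have hg1 : g 1 = f b - ⟪f' a, v⟫ - L * ‖v‖ ^ 2 / 2 := by
    have hab : a + v = b := by rw [hv]; module
    simp [hg, hab]
  rw [hg0, hg1] at hle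
  linarith

lemma grad_convex {n : ℕ} (f : EuclideanSpace ℝ (Fin n) → ℝ)
    (f' : EuclideanSpace ℝ (Fin n) → EuclideanSpace ℝ (Fin n))
    (hf_cvx : ConvexOn ℝ Set.univ f)
    (hf_grad : ∀ x, HasGradientAt f (f' x) x) (a b : EuclideanSpace ℝ (Fin n)) :
    ⟪f' a, b - a⟫ ≤ f b - f a := by
  set g : ℝ → ℝ := fun t => f (a + t • (b - a)) with hgdef
  have hgc : ConvexOn ℝ Set.univ g := by
    have := hf_cvx.comp_affineMap (AffineMap.lineMap a b)
    have he : ∀ t : ℝ, (f ∘ (AffineMap.lineMap a b)) t = g t := by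
      intro t
      simp [hgdef, AffineMap.lineMap_apply_module]
      ring_nf
      congr 1
      module
    have hpre : (AffineMap.lineMap a b : ℝ →ᵃ[ℝ] EuclideanSpace ℝ (Fin n)) ⁻¹' Set.univ = Set.univ := by simp
    rw [hpre] at this
    exact this.congr (by intro t _; exact he t)
  have hd : HasDerivAt g ⟪f' a, b - a⟫ 0 := by
    have := line_hasDerivAt f f' hf_grad a (b - a) 0
    simpa using this
  have := hgc.le_slope_of_hasDerivAt (Set.mem_univ 0) (Set.mem_univ 1) one_pos hd
  rw [slope_def_field] at this
  have hg1 : g 1 = f b := by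
    have : a + (1:ℝ) • (b - a) = b := by module
    simp [hgdef, this]
  have hg0 : g 0 = f a := by simp [hgdef]
  rw [hg1, hg0] at this
  simpa using this

lemma numA (k : ℕ) (hk : 1 ≤ k) :
    ((k:ℝ) - 3) * Real.sqrt ((k:ℝ) + 1) ≤ ((k:ℝ) - 1) * Real.sqrt (k:ℝ) := by
  have hk1 : (1:ℝ) ≤ (k:ℝ) := by exact_mod_cast hk
  have ha2 : Real.sqrt (k:ℝ) ^ 2 = (k:ℝ) := Real.sq_sqrt (by linarith)
  have hb2 : Real.sqrt ((k:ℝ)+1) ^ 2 = (k:ℝ) + 1 := Real.sq_sqrt (by linarith)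
  have ha0 : (0:ℝ) ≤ Real.sqrt (k:ℝ) := Real.sqrt_nonneg _
  have hb0 : (0:ℝ) ≤ Real.sqrt ((k:ℝ)+1) := Real.sqrt_nonneg _
  rcases le_or_gt (k:ℝ) 3 with h | h
  · have h1 : ((k:ℝ) - 3) * Real.sqrt ((k:ℝ)+1) ≤ 0 :=
      mul_nonpos_of_nonpos_of_nonneg (by linarith) hb0
    have h2 : (0:ℝ) ≤ ((k:ℝ) - 1) * Real.sqrt (k:ℝ) := mul_nonneg (by linarith) ha0
    linarith
  · by_contra hcon
    push_neg at hcon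
    have h1 : (0:ℝ) ≤ ((k:ℝ) - 1) * Real.sqrt (k:ℝ) := mul_nonneg (by linarith) ha0
    have h2 := mul_self_lt_mul_self h1 hcon
    nlinarith [ha2, hb2, ha0, hb0]
set_option maxHeartbeats 1000000 in
theorem stmt3
    (n d : ℕ)
    (X : Set (EuclideanSpace ℝ (Fin n)))
    (hX_ne : X.Nonempty) (hX_cpt : IsCompact X) (hX_cvx : Convex ℝ X)
    (f : EuclideanSpace ℝ (Fin n) → ℝ)
    (f' : EuclideanSpace ℝ (Fin n) → EuclideanSpace ℝ (Fin n))
    (hf_cvx : ConvexOn ℝ Set.univ f)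
    (hf_grad : ∀ x, HasGradientAt f (f' x) x)
    (L_f : ℝ) (hLf : 0 ≤ L_f)
    (hf'_lip : ∀ x y, ‖f' x - f' y‖ ≤ L_f * ‖x - y‖)
    (A : EuclideanSpace ℝ (Fin n) →L[ℝ] EuclideanSpace ℝ (Fin d))
    (K : Set (EuclideanSpace ℝ (Fin d)))
    (hK_ne : K.Nonempty) (hK_cl : IsClosed K) (hK_cvx : Convex ℝ K)
    (projK : EuclideanSpace ℝ (Fin d) → EuclideanSpace ℝ (Fin d))
    (hprojK : ∀ z, projK z ∈ K ∧ ∀ y ∈ K, dist z (projK z) ≤ dist z y)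
    (fstar : ℝ)
    (hfstar : IsLeast (f '' {x | x ∈ X ∧ A x ∈ K}) fstar)
    (ystar : EuclideanSpace ℝ (Fin d))
    (hystar : ∀ x ∈ X, ∀ r ∈ K, fstar ≤ f x + ⟪ystar, A x - r⟫)
    (β₀ : ℝ) (hβ₀ : 0 < β₀)
    (x s v : ℕ → EuclideanSpace ℝ (Fin n))
    (hx1 : x 1 ∈ X)
    (hv : ∀ k, 1 ≤ k → v k = (β₀ / Real.sqrt ((k:ℝ) + 1)) • f' (x k)
        + (ContinuousLinearMap.adjoint A) (A (x k) - projK (A (x k))))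
    (hs_mem : ∀ k, 1 ≤ k → s k ∈ X)
    (hlmo : ∀ k, 1 ≤ k → ∀ z ∈ X, ⟪v k, s k⟫ ≤ ⟪v k, z⟫)
    (hupd : ∀ k, 1 ≤ k → x (k + 1) = x k + (2 / ((k:ℝ) + 1)) • (s k - x k)) :
    ∀ k, 1 ≤ k →
      f (x (k + 1)) - fstar ≥ -(‖ystar‖ * Metric.infDist (A (x (k + 1))) K) ∧
      f (x (k + 1)) - fstar
        ≤ 2 * (Metric.diam X) ^ 2
            * (L_f / ((k:ℝ) + 1) + ‖A‖ ^ 2 / (β₀ * Real.sqrt ((k:ℝ) + 1))) ∧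
      Metric.infDist (A (x (k + 1))) K
        ≤ (2 * β₀ / Real.sqrt ((k:ℝ) + 1))
            * (‖ystar‖ + Metric.diam X * Real.sqrt ((L_f + ‖A‖ ^ 2 / β₀) / β₀)) := by
  obtain ⟨xstar, hxstar, hfxs⟩ := hfstar.1
  obtain ⟨hxsX, hxsK⟩ := hxstar
  have hD0 : (0:ℝ) ≤ Metric.diam X := Metric.diam_nonneg
  have hbdd := hX_cpt.isBounded
  have hdist : ∀ a ∈ X, ∀ b ∈ X, ‖a - b‖ ≤ Metric.diam X := by
    intro a ha b hb
    rw [← dist_eq_norm]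
    exact Metric.dist_le_diam_of_mem hbdd ha hb
  have hpmem : ∀ z, projK z ∈ K := fun z => (hprojK z).1
  have hdistK : ∀ z, Metric.infDist z K = ‖z - projK z‖ := by
    intro z
    apply le_antisymm
    · rw [← dist_eq_norm]
      exact Metric.infDist_le_dist_of_mem (hpmem z)
    · haveI := hK_ne.to_subtype
      rw [Metric.infDist_eq_iInf, ← dist_eq_norm]
      exact le_ciInf fun y => (hprojK z).2 y y.2
  have hxmem : ∀ j : ℕ, 1 ≤ j → x j ∈ X := by
    intro j hj
    induction j with
    | zero => omega
    | succ m ih =>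
      rcases Nat.lt_or_ge 1 (m+1) with h | h
      · have hm : 1 ≤ m := by omega
        have hx := ih hm
        rw [hupd m hm]
        have hm1 : (1:ℝ) ≤ (m:ℝ) := by exact_mod_cast hm
        have hc0 : (0:ℝ) ≤ 2/((m:ℝ)+1) := by positivity
        have hc1 : 2/((m:ℝ)+1) ≤ 1 := by
          rw [div_le_one (by linarith)]
          linarith
        have heq : x m + (2/((m:ℝ)+1)) • (s m - x m)
            = (1 - 2/((m:ℝ)+1)) • x m + (2/((m:ℝ)+1)) • s m := by module
        rw [heq]
        exact hX_cvx hx (hs_mem m hm) (by linarith) hc0 (by ring)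
      · have : m = 0 := by omega
        subst this
        exact hx1
  -- penalty smoothness
  have hpen : ∀ a b : EuclideanSpace ℝ (Fin n),
      ‖A b - projK (A b)‖^2 ≤ ‖A a - projK (A a)‖^2
        + 2*⟪(ContinuousLinearMap.adjoint A) (A a - projK (A a)), b - a⟫
        + ‖A‖^2*‖b-a‖^2 := by
    intro a b
    have h1 : ‖A b - projK (A b)‖ ≤ ‖A b - projK (A a)‖ := by
      have := (hprojK (A b)).2 (projK (A a)) (hpmem (A a))
      rwa [dist_eq_norm, dist_eq_norm] at this
    have h2 : A b - projK (A a) = (A a - projK (A a)) + A (b - a) := by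
      rw [map_sub]; abel
    have h3 : ‖A b - projK (A a)‖^2
        = ‖A a - projK (A a)‖^2 + 2*⟪A a - projK (A a), A (b-a)⟫ + ‖A (b-a)‖^2 := by
      rw [h2, norm_add_sq_real]
    have h4 : ⟪A a - projK (A a), A (b-a)⟫
        = ⟪(ContinuousLinearMap.adjoint A) (A a - projK (A a)), b - a⟫ :=
      (ContinuousLinearMap.adjoint_inner_left A (b-a) (A a - projK (A a))).symm
    have h5 : ‖A (b-a)‖ ≤ ‖A‖*‖b-a‖ := A.le_opNorm _
    have h6 : ‖A b - projK (A b)‖^2 ≤ ‖A b - projK (A a)‖^2 :=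
      pow_le_pow_left₀ (norm_nonneg _) h1 2
    have h7 : ‖A (b-a)‖^2 ≤ (‖A‖*‖b-a‖)^2 :=
      pow_le_pow_left₀ (norm_nonneg _) h5 2
    have h8 : (‖A‖*‖b-a‖)^2 = ‖A‖^2*‖b-a‖^2 := by ring
    rw [h4] at h3
    linarith
  have hpen_star : ∀ a : EuclideanSpace ℝ (Fin n),
      ⟪(ContinuousLinearMap.adjoint A) (A a - projK (A a)), xstar - a⟫
        ≤ -‖A a - projK (A a)‖^2 := by
    intro a
    rw [ContinuousLinearMap.adjoint_inner_left]
    have h2 : A (xstar - a) = (A xstar - projK (A a)) - (A a - projK (A a)) := by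
      rw [map_sub]; abel
    rw [h2, inner_sub_right]
    have h3 := proj_var hK_cvx projK hprojK (A a) hxsK
    have h4 : ⟪A a - projK (A a), A a - projK (A a)⟫ = ‖A a - projK (A a)‖^2 :=
      real_inner_self_eq_norm_sq _
    linarith
  -- one-step recursion for the smoothed gap
  have hestep : ∀ j : ℕ, 1 ≤ j →
      (f (x (j+1)) - fstar) + Real.sqrt ((j:ℝ)+1) * ‖A (x (j+1)) - projK (A (x (j+1)))‖^2 / (2*β₀)
        ≤ (1 - 2/((j:ℝ)+1)) * ((f (x j) - fstar)
            + Real.sqrt (j:ℝ) * ‖A (x j) - projK (A (x j))‖^2 / (2*β₀))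
          + (2/((j:ℝ)+1))^2 * ((L_f + Real.sqrt ((j:ℝ)+1) * ‖A‖^2 / β₀) * (Metric.diam X)^2) / 2 := by
    intro j hj
    have hj1 : (1:ℝ) ≤ (j:ℝ) := by exact_mod_cast hj
    have hjp : (0:ℝ) < (j:ℝ)+1 := by linarith
    set c : ℝ := 2/((j:ℝ)+1) with hcdef
    have hc0 : 0 < c := by positivity
    have hs1 : (0:ℝ) < Real.sqrt ((j:ℝ)+1) := Real.sqrt_pos.2 hjp
    have hwD : ‖s j - x j‖ ≤ Metric.diam X := hdist _ (hs_mem j hj) _ (hxmem j hj)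
    have hxk1 : x (j+1) = x j + c • (s j - x j) := hupd j hj
    have he : x (j+1) - x j = c • (s j - x j) := by rw [hxk1]; module
    have hn : ‖c • (s j - x j)‖^2 = c^2 * ‖s j - x j‖^2 := by
      rw [norm_smul, mul_pow, Real.norm_eq_abs, sq_abs]
    have Hf : f (x (j+1)) ≤ f (x j) + c * ⟪f' (x j), s j - x j⟫
        + L_f * (c^2 * ‖s j - x j‖^2)/2 := by
      have hd := descent_lemma f f' hf_grad L_f hLf hf'_lip (x j) (x (j+1))
      rw [he, real_inner_smul_right, hn] at hd
      linarith
    have Hp : ‖A (x (j+1)) - projK (A (x (j+1)))‖^2 ≤ ‖A (x j) - projK (A (x j))‖^2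
        + 2*(c*⟪(ContinuousLinearMap.adjoint A) (A (x j) - projK (A (x j))), s j - x j⟫)
        + ‖A‖^2*(c^2*‖s j - x j‖^2) := by
      have hd := hpen (x j) (x (j+1))
      rw [he, real_inner_smul_right, hn] at hd
      linarith
    have key1 : ⟪f' (x j), s j - x j⟫
        + (Real.sqrt ((j:ℝ)+1)/β₀) * ⟪(ContinuousLinearMap.adjoint A) (A (x j) - projK (A (x j))), s j - x j⟫
        ≤ (fstar - f (x j)) - (Real.sqrt ((j:ℝ)+1)/β₀) * ‖A (x j) - projK (A (x j))‖^2 := by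
      have hl0 := hlmo j hj xstar hxsX
      have hl : ⟪v j, s j - x j⟫ ≤ ⟪v j, xstar - x j⟫ := by
        rw [inner_sub_right, inner_sub_right]
        linarith
      rw [hv j hj] at hl
      rw [inner_add_left, inner_add_left, real_inner_smul_left, real_inner_smul_left] at hl
      have hg1' : ⟪f' (x j), xstar - x j⟫ ≤ fstar - f (x j) := by
        have h := grad_convex f f' hf_cvx hf_grad (x j) xstar
        rw [hfxs] at h
        linarith
      have hg2' := hpen_star (x j)
      have ht0 : (0:ℝ) < Real.sqrt ((j:ℝ)+1)/β₀ := by positivity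
      have hβs : Real.sqrt ((j:ℝ)+1)/β₀ * (β₀/Real.sqrt ((j:ℝ)+1)) = 1 := by
        field_simp
      have hmul := mul_le_mul_of_nonneg_left hl ht0.le
      have e1 : ∀ u w : ℝ, (Real.sqrt ((j:ℝ)+1)/β₀) * (β₀/Real.sqrt ((j:ℝ)+1) * u + w)
          = u + (Real.sqrt ((j:ℝ)+1)/β₀) * w := by
        intro u w
        rw [mul_add, ← mul_assoc, hβs, one_mul]
      rw [e1, e1] at hmul
      have hg2'' := mul_le_mul_of_nonneg_left hg2' ht0.le
      linarith
    have hnum := numA j hj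
    have hcoef : (1-2*c)*Real.sqrt ((j:ℝ)+1)*‖A (x j) - projK (A (x j))‖^2/(2*β₀)
        ≤ (1-c)*Real.sqrt (j:ℝ)*‖A (x j) - projK (A (x j))‖^2/(2*β₀) := by
      have h1 : (1-2*c)*Real.sqrt ((j:ℝ)+1) ≤ (1-c)*Real.sqrt (j:ℝ) := by
        have hmul2 := mul_le_mul_of_nonneg_right hnum (le_of_lt (inv_pos.2 hjp))
        have hinv : ((j:ℝ)+1) * ((j:ℝ)+1)⁻¹ = 1 := mul_inv_cancel₀ (ne_of_gt hjp)
        have e2 : (1-2*c)*Real.sqrt ((j:ℝ)+1) = ((j:ℝ)-3)*Real.sqrt ((j:ℝ)+1) * ((j:ℝ)+1)⁻¹ := by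
          rw [hcdef]; linear_combination (-Real.sqrt ((j:ℝ)+1)) * hinv
        have e3 : (1-c)*Real.sqrt (j:ℝ) = ((j:ℝ)-1)*Real.sqrt (j:ℝ) * ((j:ℝ)+1)⁻¹ := by
          rw [hcdef]; linear_combination (-Real.sqrt (j:ℝ)) * hinv
        rw [e2, e3]; exact hmul2
      have hq0 : (0:ℝ) ≤ ‖A (x j) - projK (A (x j))‖^2/(2*β₀) := by positivity
      calc (1-2*c)*Real.sqrt ((j:ℝ)+1)*‖A (x j) - projK (A (x j))‖^2/(2*β₀)
          = ((1-2*c)*Real.sqrt ((j:ℝ)+1)) * (‖A (x j) - projK (A (x j))‖^2/(2*β₀)) := by ring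
        _ ≤ ((1-c)*Real.sqrt (j:ℝ)) * (‖A (x j) - projK (A (x j))‖^2/(2*β₀)) :=
            mul_le_mul_of_nonneg_right h1 hq0
        _ = (1-c)*Real.sqrt (j:ℝ)*‖A (x j) - projK (A (x j))‖^2/(2*β₀) := by ring
    have hw2 : ‖s j - x j‖^2 ≤ (Metric.diam X)^2 := pow_le_pow_left₀ (norm_nonneg _) hwD 2
    have hL0 : (0:ℝ) ≤ L_f + Real.sqrt ((j:ℝ)+1)*‖A‖^2/β₀ := by positivity
    have hwD2 : c^2*‖s j - x j‖^2*(L_f + Real.sqrt ((j:ℝ)+1)*‖A‖^2/β₀)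
        ≤ c^2*(Metric.diam X)^2*(L_f + Real.sqrt ((j:ℝ)+1)*‖A‖^2/β₀) := by
      apply mul_le_mul_of_nonneg_right _ hL0
      exact mul_le_mul_of_nonneg_left hw2 (sq_nonneg c)
    have Hp' := mul_le_mul_of_nonneg_left Hp
      (le_of_lt (by positivity : (0:ℝ) < Real.sqrt ((j:ℝ)+1)/(2*β₀)))
    have key1' := mul_le_mul_of_nonneg_left key1 hc0.le
    ring_nf at Hf Hp' key1' hcoef hwD2 ⊢
    linarith [Hf, Hp', key1', hcoef, hwD2]
  -- weighted induction
  have hEbound : ∀ j : ℕ, 1 ≤ j →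
      (j:ℝ) * ((j:ℝ)+1) * ((f (x (j+1)) - fstar)
          + Real.sqrt ((j:ℝ)+1) * ‖A (x (j+1)) - projK (A (x (j+1)))‖^2 / (2*β₀))
        ≤ 2*(Metric.diam X)^2*((j:ℝ)*L_f + (j:ℝ)*Real.sqrt ((j:ℝ)+1)*‖A‖^2/β₀) := by
    intro j hj
    induction j, hj using Nat.le_induction with
    | base =>
      have h := hestep 1 le_rfl
      push_cast at h ⊢
      have hpos : (0:ℝ) ≤ (L_f + Real.sqrt ((1:ℝ)+1)*‖A‖^2/β₀)*(Metric.diam X)^2 := by positivity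
      ring_nf at h hpos ⊢
      linarith [h, hpos]
    | succ m hm ih =>
      have h := hestep (m+1) (by omega)
      have hm1 : (1:ℝ) ≤ (m:ℝ) := by exact_mod_cast hm
      push_cast at h ih ⊢
      have hM2 : (0:ℝ) < (m:ℝ)+1+1 := by linarith
      have hmulpos : (0:ℝ) ≤ ((m:ℝ)+1)*((m:ℝ)+1+1) := by positivity
      have hL0 : (0:ℝ) ≤ (L_f + Real.sqrt ((m:ℝ)+1+1)*‖A‖^2/β₀) * (Metric.diam X)^2 := by
        positivity
      have e4 : ((m:ℝ)+1)*((m:ℝ)+1+1)*(1 - 2/((m:ℝ)+1+1)) = (m:ℝ)*((m:ℝ)+1) := by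
        field_simp
        ring
      have q1 : ((m:ℝ)+1)*((m:ℝ)+1+1)*((2/((m:ℝ)+1+1))^2/2) = 2*((m:ℝ)+1)/((m:ℝ)+1+1) := by
        field_simp
      have q2 : 2*((m:ℝ)+1)/((m:ℝ)+1+1) ≤ 2 := by
        rw [div_le_iff₀ hM2]
        linarith
      have e5 : ((m:ℝ)+1)*((m:ℝ)+1+1)*((2/((m:ℝ)+1+1))^2
            * ((L_f + Real.sqrt ((m:ℝ)+1+1)*‖A‖^2/β₀) * (Metric.diam X)^2) / 2)
          ≤ 2*((L_f + Real.sqrt ((m:ℝ)+1+1)*‖A‖^2/β₀) * (Metric.diam X)^2) := by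
        calc ((m:ℝ)+1)*((m:ℝ)+1+1)*((2/((m:ℝ)+1+1))^2
              * ((L_f + Real.sqrt ((m:ℝ)+1+1)*‖A‖^2/β₀) * (Metric.diam X)^2) / 2)
            = (((m:ℝ)+1)*((m:ℝ)+1+1)*((2/((m:ℝ)+1+1))^2/2))
              * ((L_f + Real.sqrt ((m:ℝ)+1+1)*‖A‖^2/β₀) * (Metric.diam X)^2) := by ring
          _ ≤ 2 * ((L_f + Real.sqrt ((m:ℝ)+1+1)*‖A‖^2/β₀) * (Metric.diam X)^2) := by
              apply mul_le_mul_of_nonneg_right _ hL0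
              rw [q1]
              exact q2
      have h2 := mul_le_mul_of_nonneg_left h hmulpos
      have h3 : ((m:ℝ)+1)*((m:ℝ)+1+1)*((f (x (m+1+1)) - fstar)
            + Real.sqrt ((m:ℝ)+1+1) * ‖A (x (m+1+1)) - projK (A (x (m+1+1)))‖^2 / (2*β₀))
          ≤ (m:ℝ)*((m:ℝ)+1)*((f (x (m+1)) - fstar)
            + Real.sqrt ((m:ℝ)+1) * ‖A (x (m+1)) - projK (A (x (m+1)))‖^2 / (2*β₀))
            + 2*((L_f + Real.sqrt ((m:ℝ)+1+1)*‖A‖^2/β₀) * (Metric.diam X)^2) := by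
        have e4' : ((m:ℝ)+1)*((m:ℝ)+1+1)*((1 - 2/((m:ℝ)+1+1))
              * ((f (x (m+1)) - fstar)
                + Real.sqrt ((m:ℝ)+1) * ‖A (x (m+1)) - projK (A (x (m+1)))‖^2 / (2*β₀)))
            = (m:ℝ)*((m:ℝ)+1)*((f (x (m+1)) - fstar)
                + Real.sqrt ((m:ℝ)+1) * ‖A (x (m+1)) - projK (A (x (m+1)))‖^2 / (2*β₀)) := by
          rw [← e4]
          ring
        ring_nf at h2 e4' e5 ⊢
        linarith [h2, e4', e5]
      have hs : Real.sqrt ((m:ℝ)+1) ≤ Real.sqrt ((m:ℝ)+1+1) := Real.sqrt_le_sqrt (by linarith)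
      have hfin : (m:ℝ)*Real.sqrt ((m:ℝ)+1)*(‖A‖^2*(Metric.diam X)^2/β₀)
          ≤ (m:ℝ)*Real.sqrt ((m:ℝ)+1+1)*(‖A‖^2*(Metric.diam X)^2/β₀) := by
        apply mul_le_mul_of_nonneg_right _ (by positivity)
        exact mul_le_mul_of_nonneg_left hs (by linarith)
      ring_nf at h3 ih hfin ⊢
      linarith [h3, ih, hfin]
  -- per-iterate bound on the smoothed gap
  have hEb2 : ∀ j : ℕ, 1 ≤ j →
      (f (x (j+1)) - fstar) + Real.sqrt ((j:ℝ)+1) * ‖A (x (j+1)) - projK (A (x (j+1)))‖^2 / (2*β₀)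
        ≤ 2*(Metric.diam X)^2*(L_f/((j:ℝ)+1) + ‖A‖^2/(β₀*Real.sqrt ((j:ℝ)+1))) := by
    intro j hj
    have hj1 : (1:ℝ) ≤ (j:ℝ) := by exact_mod_cast hj
    have hjp : (0:ℝ) < (j:ℝ)+1 := by linarith
    have hs1 : (0:ℝ) < Real.sqrt ((j:ℝ)+1) := Real.sqrt_pos.2 (by linarith)
    have hss : Real.sqrt ((j:ℝ)+1) * Real.sqrt ((j:ℝ)+1) = (j:ℝ)+1 :=
      Real.mul_self_sqrt (by linarith)
    have hb := hEbound j hj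
    have hjj : (0:ℝ) < (j:ℝ)*((j:ℝ)+1) := by positivity
    have hrw : ‖A‖^2/(β₀*Real.sqrt ((j:ℝ)+1)) = Real.sqrt ((j:ℝ)+1) * ‖A‖^2/(β₀*((j:ℝ)+1)) := by
      rw [div_eq_div_iff (by positivity) (by positivity)]
      linear_combination (-(‖A‖^2*β₀)) * hss
    rw [hrw]
    have h2 : ((f (x (j+1)) - fstar)
          + Real.sqrt ((j:ℝ)+1) * ‖A (x (j+1)) - projK (A (x (j+1)))‖^2 / (2*β₀))
          * ((j:ℝ)*((j:ℝ)+1))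
        ≤ 2*(Metric.diam X)^2*((j:ℝ)*L_f + (j:ℝ)*Real.sqrt ((j:ℝ)+1)*‖A‖^2/β₀) := by
      ring_nf at hb ⊢
      linarith [hb]
    have h4 := (le_div_iff₀ hjj).2 h2
    have h5 : 2*(Metric.diam X)^2*((j:ℝ)*L_f + (j:ℝ)*Real.sqrt ((j:ℝ)+1)*‖A‖^2/β₀) / ((j:ℝ)*((j:ℝ)+1))
        = 2*(Metric.diam X)^2*(L_f/((j:ℝ)+1) + Real.sqrt ((j:ℝ)+1) * ‖A‖^2/(β₀*((j:ℝ)+1))) := by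
      rw [div_eq_iff (ne_of_gt hjj)]
      field_simp
    rw [h5] at h4
    exact h4
  -- final conclusions
  intro k hk
  have hk1 : (1:ℝ) ≤ (k:ℝ) := by exact_mod_cast hk
  have hkp : (0:ℝ) < (k:ℝ)+1 := by linarith
  have hs1 : (0:ℝ) < Real.sqrt ((k:ℝ)+1) := Real.sqrt_pos.2 (by linarith)
  have hxk1X : x (k+1) ∈ X := hxmem (k+1) (by omega)
  have hqdef : Metric.infDist (A (x (k+1))) K = ‖A (x (k+1)) - projK (A (x (k+1)))‖ := hdistK _
  have hqnn : (0:ℝ) ≤ ‖A (x (k+1)) - projK (A (x (k+1)))‖ := norm_nonneg _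
  have hlow : f (x (k+1)) - fstar ≥ -(‖ystar‖ * ‖A (x (k+1)) - projK (A (x (k+1)))‖) := by
    have h := hystar (x (k+1)) hxk1X (projK (A (x (k+1)))) (hpmem _)
    have h2 : ⟪ystar, A (x (k+1)) - projK (A (x (k+1)))⟫
        ≤ ‖ystar‖ * ‖A (x (k+1)) - projK (A (x (k+1)))‖ := real_inner_le_norm _ _
    linarith
  have hub := hEb2 k hk
  refine ⟨by rw [hqdef]; exact hlow, ?_, ?_⟩
  · have hpen0 : (0:ℝ) ≤ Real.sqrt ((k:ℝ)+1) * ‖A (x (k+1)) - projK (A (x (k+1)))‖^2/(2*β₀) := by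
      positivity
    linarith
  · rw [hqdef]
    have hss : Real.sqrt ((k:ℝ)+1) * Real.sqrt ((k:ℝ)+1) = (k:ℝ)+1 :=
      Real.mul_self_sqrt (by linarith)
    have hsle : Real.sqrt ((k:ℝ)+1) ≤ (k:ℝ)+1 := by
      calc Real.sqrt ((k:ℝ)+1) ≤ Real.sqrt (((k:ℝ)+1)^2) := Real.sqrt_le_sqrt (by nlinarith)
        _ = (k:ℝ)+1 := Real.sqrt_sq (by linarith)
    have hub2 : (f (x (k+1)) - fstar)
          + Real.sqrt ((k:ℝ)+1) * ‖A (x (k+1)) - projK (A (x (k+1)))‖^2/(2*β₀)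
        ≤ 2*(Metric.diam X)^2*(L_f + ‖A‖^2/β₀)/Real.sqrt ((k:ℝ)+1) := by
      have h1 : L_f/((k:ℝ)+1) ≤ L_f/Real.sqrt ((k:ℝ)+1) := by
        apply div_le_div_of_nonneg_left hLf hs1 hsle
      have heqq : 2*(Metric.diam X)^2*(L_f/Real.sqrt ((k:ℝ)+1) + ‖A‖^2/(β₀*Real.sqrt ((k:ℝ)+1)))
          = 2*(Metric.diam X)^2*(L_f + ‖A‖^2/β₀)/Real.sqrt ((k:ℝ)+1) := by
        field_simp
      have hD2 : (0:ℝ) ≤ 2*(Metric.diam X)^2 := by positivity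
      have h3 : 2*(Metric.diam X)^2*(L_f/((k:ℝ)+1) + ‖A‖^2/(β₀*Real.sqrt ((k:ℝ)+1)))
          ≤ 2*(Metric.diam X)^2*(L_f/Real.sqrt ((k:ℝ)+1) + ‖A‖^2/(β₀*Real.sqrt ((k:ℝ)+1))) := by
        apply mul_le_mul_of_nonneg_left _ hD2
        linarith
      rw [heqq] at h3
      linarith [hub]
    have hB : Real.sqrt ((k:ℝ)+1)*‖A (x (k+1)) - projK (A (x (k+1)))‖^2/(2*β₀)
        ≤ 2*(Metric.diam X)^2*(L_f + ‖A‖^2/β₀)/Real.sqrt ((k:ℝ)+1)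
          + ‖ystar‖*‖A (x (k+1)) - projK (A (x (k+1)))‖ := by
      linarith
    have hfac : (0:ℝ) < 2*β₀/Real.sqrt ((k:ℝ)+1) := by positivity
    have hC : ‖A (x (k+1)) - projK (A (x (k+1)))‖^2
        ≤ 4*β₀*(Metric.diam X)^2*(L_f + ‖A‖^2/β₀)/((k:ℝ)+1)
          + (2*β₀/Real.sqrt ((k:ℝ)+1))*(‖ystar‖*‖A (x (k+1)) - projK (A (x (k+1)))‖) := by
      have hmul := mul_le_mul_of_nonneg_left hB hfac.le
      have e6 : (2*β₀/Real.sqrt ((k:ℝ)+1))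
            * (Real.sqrt ((k:ℝ)+1)*‖A (x (k+1)) - projK (A (x (k+1)))‖^2/(2*β₀))
          = ‖A (x (k+1)) - projK (A (x (k+1)))‖^2 := by
        field_simp
      have e7 : (2*β₀/Real.sqrt ((k:ℝ)+1))
            * (2*(Metric.diam X)^2*(L_f + ‖A‖^2/β₀)/Real.sqrt ((k:ℝ)+1))
          = 4*β₀*(Metric.diam X)^2*(L_f + ‖A‖^2/β₀)/((k:ℝ)+1) := by
        rw [div_mul_div_comm, hss]
        ring
      rw [mul_add, e6, e7] at hmul
      exact hmul
    have hr2 : (2*β₀/Real.sqrt ((k:ℝ)+1)*(Metric.diam X * Real.sqrt ((L_f + ‖A‖^2/β₀)/β₀)))^2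
        = 4*β₀*(Metric.diam X)^2*(L_f + ‖A‖^2/β₀)/((k:ℝ)+1) := by
      have h9 : Real.sqrt ((L_f + ‖A‖^2/β₀)/β₀)^2 = (L_f + ‖A‖^2/β₀)/β₀ :=
        Real.sq_sqrt (by positivity)
      have hss2 : Real.sqrt ((k:ℝ)+1)^2 = (k:ℝ)+1 := Real.sq_sqrt (by linarith)
      rw [mul_pow, mul_pow, h9, div_pow, hss2]
      field_simp
      ring
    have hr0 : (0:ℝ) ≤ 2*β₀/Real.sqrt ((k:ℝ)+1)*(Metric.diam X * Real.sqrt ((L_f + ‖A‖^2/β₀)/β₀)) := by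
      positivity
    have hb0 : (0:ℝ) ≤ 2*β₀/Real.sqrt ((k:ℝ)+1)*‖ystar‖ := by positivity
    by_contra hcon
    push_neg at hcon
    have e9 : 2*β₀/Real.sqrt ((k:ℝ)+1)*(‖ystar‖ + Metric.diam X * Real.sqrt ((L_f + ‖A‖^2/β₀)/β₀))
        = 2*β₀/Real.sqrt ((k:ℝ)+1)*‖ystar‖
          + 2*β₀/Real.sqrt ((k:ℝ)+1)*(Metric.diam X * Real.sqrt ((L_f + ‖A‖^2/β₀)/β₀)) := by
      ring
    rw [e9] at hcon
    have hq0 : (0:ℝ) < ‖A (x (k+1)) - projK (A (x (k+1)))‖ :=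
      lt_of_le_of_lt (by positivity) hcon
    have h10 := mul_lt_mul_of_pos_right hcon hq0
    have h11 := mul_le_mul_of_nonneg_left hcon.le hr0
    have hC2 : ‖A (x (k+1)) - projK (A (x (k+1)))‖^2
        ≤ (2*β₀/Real.sqrt ((k:ℝ)+1)*(Metric.diam X * Real.sqrt ((L_f + ‖A‖^2/β₀)/β₀)))^2
          + (2*β₀/Real.sqrt ((k:ℝ)+1)*‖ystar‖)*‖A (x (k+1)) - projK (A (x (k+1)))‖ := by
      rw [hr2]
      ring_nf at hC ⊢
      linarith [hC]
    nlinarith [h10, h11, hC2, mul_nonneg hr0 hb0, hqnn]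
end

section
/- Under the homotopy CGM with multiplicatively inexact linear minimization oracle of parameter δ ∈ (0,1], for every k ≥ 1 the iterate x_{k+1} satisfies the smoothed-gap bound F_{β_k}(x_{k+1}) − F⋆ ≤ (2/δ) ( (D² L_f + δ ℰ)/(δ k + 2) + D² ‖A‖² / (β₀ √(δ k + 2)) ), where ℰ = F(x₁) − F⋆. -/
open RealInnerProductSpace

variable {G : Type*} [NormedAddCommGroup G] [InnerProductSpace ℝ G]

lemma aux_env_descent (g : G → ℝ) {β : ℝ} (hβ : 0 < β) (z z' p : G) :
    g p + ‖z' - p‖ ^ 2 / (2 * β)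
      ≤ (g p + ‖z - p‖ ^ 2 / (2 * β)) + ⟪z - p, z' - z⟫ / β + ‖z' - z‖ ^ 2 / (2 * β) := by
  have hd : z' - p = (z' - z) + (z - p) := by abel
  rw [hd, norm_add_sq_real, real_inner_comm]
  have : (0:ℝ) < 2 * β := by linarith
  apply le_of_eq
  field_simp
  ring

lemma aux_subgrad (g : G → ℝ) (hg : ConvexOn ℝ Set.univ g) {β : ℝ} (hβ : 0 < β)
    (z p : G) (hp : ∀ y, g p + ‖z - p‖ ^ 2 / (2 * β) ≤ g y + ‖z - y‖ ^ 2 / (2 * β)) (w : G) :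
    ⟪z - p, w - p⟫ ≤ β * (g w - g p) := by
  set c : ℝ := ‖w - p‖ ^ 2 with hc
  have hc0 : 0 ≤ c := by positivity
  apply le_of_forall_pos_le_add
  intro ε hε
  set t : ℝ := min 1 (ε / (c / 2 + 1)) with htdef
  have ht0 : 0 < t := lt_min one_pos (by positivity)
  have ht1 : t ≤ 1 := min_le_left _ _
  have htc : t * c ≤ 2 * ε := by
    have h := min_le_right 1 (ε / (c / 2 + 1))
    rw [le_div_iff₀ (by positivity)] at h
    nlinarith
  have hconv : g (p + t • (w - p)) ≤ (1 - t) * g p + t * g w := by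
    have h := hg.2 (Set.mem_univ p) (Set.mem_univ w) (by linarith : (0:ℝ) ≤ 1 - t) ht0.le
      (by ring)
    have he : (1 - t) • p + t • w = p + t • (w - p) := by module
    rw [he] at h
    simpa using h
  have hkey := hp (p + t • (w - p))
  have hexp : ‖z - (p + t • (w - p))‖ ^ 2 = ‖z - p‖ ^ 2 - 2 * t * ⟪z - p, w - p⟫ + t ^ 2 * c := by
    have hd : z - (p + t • (w - p)) = (z - p) - t • (w - p) := by abel
    rw [hd, norm_sub_sq_real, real_inner_smul_right, norm_smul]
    simp [mul_pow, sq_abs]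
    ring
  rw [hexp] at hkey
  have h2β : (0:ℝ) < 2 * β := by linarith
  have h3 : 2 * t * ⟪z - p, w - p⟫ - t ^ 2 * c ≤ t * (g w - g p) * (2 * β) := by
    have h4 : (2 * t * ⟪z - p, w - p⟫ - t ^ 2 * c) / (2 * β) ≤ t * (g w - g p) := by
      have : g p + ‖z - p‖ ^ 2 / (2 * β)
          ≤ (1 - t) * g p + t * g w
            + (‖z - p‖ ^ 2 - 2 * t * ⟪z - p, w - p⟫ + t ^ 2 * c) / (2 * β) := by
        calc g p + ‖z - p‖ ^ 2 / (2 * β) ≤ _ := hkey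
          _ ≤ _ := by linarith
      have hsplit : (‖z - p‖ ^ 2 - 2 * t * ⟪z - p, w - p⟫ + t ^ 2 * c) / (2 * β)
          = ‖z - p‖ ^ 2 / (2 * β) - (2 * t * ⟪z - p, w - p⟫ - t ^ 2 * c) / (2 * β) := by
        ring
      rw [hsplit] at this
      linarith
    calc 2 * t * ⟪z - p, w - p⟫ - t ^ 2 * c
        = ((2 * t * ⟪z - p, w - p⟫ - t ^ 2 * c) / (2 * β)) * (2 * β) := by field_simp
      _ ≤ (t * (g w - g p)) * (2 * β) := by
          exact mul_le_mul_of_nonneg_right h4 h2β.le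
      _ = t * (g w - g p) * (2 * β) := rfl
  nlinarith [mul_pos ht0 hε]



lemma aux_star (g : G → ℝ) (hg : ConvexOn ℝ Set.univ g) {β : ℝ} (hβ : 0 < β)
    (z p : G) (hp : ∀ y, g p + ‖z - p‖ ^ 2 / (2 * β) ≤ g y + ‖z - y‖ ^ 2 / (2 * β)) (w : G) :
    ⟪z - p, w - z⟫ ≤ β * (g w - (g p + ‖z - p‖ ^ 2 / (2 * β))) - ‖z - p‖ ^ 2 / 2 := by
  have h1 := aux_subgrad g hg hβ z p hp w
  have hd : w - z = (w - p) - (z - p) := by abel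
  rw [hd, inner_sub_right, real_inner_self_eq_norm_sq]
  have he : β * (g w - (g p + ‖z - p‖ ^ 2 / (2 * β)))
      = β * (g w - g p) - ‖z - p‖ ^ 2 / 2 := by field_simp; ring
  rw [he]
  linarith

lemma aux_beta (g : G → ℝ) (hg : ConvexOn ℝ Set.univ g) {a b : ℝ} (ha : 0 < a) (hab : a ≤ b)
    (z p q : G) (hpa : ∀ y, g p + ‖z - p‖ ^ 2 / (2 * a) ≤ g y + ‖z - y‖ ^ 2 / (2 * a)) :
    g p + ‖z - p‖ ^ 2 / (2 * a)
      ≤ (g q + ‖z - q‖ ^ 2 / (2 * b)) + (b - a) * ‖z - p‖ ^ 2 / (2 * a ^ 2) := by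
  have hb : 0 < b := lt_of_lt_of_le ha hab
  have h1 := aux_subgrad g hg ha z p hpa q
  have hd : q - p = (z - p) - (z - q) := by abel
  rw [hd, inner_sub_right, real_inner_self_eq_norm_sq] at h1
  set I : ℝ := ⟪z - p, z - q⟫ with hI
  set W : ℝ := ‖z - p‖
  set Ee : ℝ := ‖z - q‖
  have hW : 0 ≤ W := norm_nonneg _
  have hE : 0 ≤ Ee := norm_nonneg _
  have hIWE : I ≤ W * Ee := real_inner_le_norm _ _
  have hq : g p + (W ^ 2 - I) / a ≤ g q := by
    have : (W ^ 2 - I) / a ≤ g q - g p := by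
      rw [div_le_iff₀ ha]; linarith
    linarith
  have main : W ^ 2 / (2 * a) - (W ^ 2 - I) / a - Ee ^ 2 / (2 * b)
      - (b - a) * W ^ 2 / (2 * a ^ 2) ≤ 0 := by
    have e : W ^ 2 / (2 * a) - (W ^ 2 - I) / a - Ee ^ 2 / (2 * b)
        - (b - a) * W ^ 2 / (2 * a ^ 2)
        = (2 * a * b * I - a ^ 2 * Ee ^ 2 - b ^ 2 * W ^ 2) / (2 * a ^ 2 * b) := by
      field_simp; ring
    rw [e]
    apply div_nonpos_of_nonpos_of_nonneg _ (by positivity)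
    nlinarith [sq_nonneg (b * W - a * Ee), mul_pos ha hb]
  linarith


variable {E : Type*} [NormedAddCommGroup E] [InnerProductSpace ℝ E] [CompleteSpace E]

lemma aux_line_deriv (f : E → ℝ) (f' : E → E) (hgrad : ∀ x, HasGradientAt f (f' x) x)
    (x y : E) (t : ℝ) :
    HasDerivAt (fun t : ℝ => f (x + t • (y - x))) ⟪f' (x + t • (y - x)), y - x⟫ t := by
  have hc : HasDerivAt (fun t : ℝ => x + t • (y - x)) (y - x) t := by
    simpa using ((hasDerivAt_id t).smul_const (y - x)).const_add x
  have hf := (hgrad (x + t • (y - x))).hasFDerivAt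
  have := hf.comp_hasDerivAt t hc
  simp [InnerProductSpace.toDual_apply_apply] at this
  exact this

lemma aux_grad_convex (f : E → ℝ) (f' : E → E) (hf : ConvexOn ℝ Set.univ f)
    (hgrad : ∀ x, HasGradientAt f (f' x) x) (x y : E) :
    ⟪f' x, y - x⟫ ≤ f y - f x := by
  set φ : ℝ → ℝ := fun t => f (x + t • (y - x)) with hφ
  have hd : HasDerivAt φ ⟪f' x, y - x⟫ 0 := by
    have := aux_line_deriv f f' hgrad x y 0
    simpa using this
  have htend : Filter.Tendsto (fun t : ℝ => t⁻¹ * (φ t - φ 0)) (nhdsWithin 0 (Set.Ioi 0))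
      (nhds ⟪f' x, y - x⟫) := by
    have h := hd.tendsto_slope_zero_right
    simpa [slope_def_field] using h
  refine le_of_tendsto htend ?_
  filter_upwards [Ioc_mem_nhdsGT_of_mem (by constructor <;> norm_num : (0:ℝ) ∈ Set.Ico 0 1)]
  intro t ht
  have hcvx := hf.2 (Set.mem_univ x) (Set.mem_univ y) (by linarith [ht.2] : (0:ℝ) ≤ 1 - t)
    ht.1.le (by ring)
  have he : (1 - t) • x + t • y = x + t • (y - x) := by module
  rw [he] at hcvx
  have hφ0 : φ 0 = f x := by simp [hφ]
  have hcvx' : φ t ≤ (1 - t) * f x + t * f y := by simpa [hφ, smul_eq_mul] using hcvx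
  rw [inv_mul_le_iff₀ ht.1, hφ0]
  nlinarith [ht.1]

lemma aux_descent_f (f : E → ℝ) (f' : E → E) (hgrad : ∀ x, HasGradientAt f (f' x) x)
    (L : ℝ) (hL : 0 ≤ L) (hlip : ∀ a b, ‖f' a - f' b‖ ≤ L * ‖a - b‖) (x y : E) :
    f y ≤ f x + ⟪f' x, y - x⟫ + L * ‖y - x‖ ^ 2 / 2 := by
  set c1 : ℝ := ⟪f' x, y - x⟫ with hc1
  set c2 : ℝ := L * ‖y - x‖ ^ 2 / 2 with hc2
  set ψ : ℝ → ℝ := fun t => f (x + t • (y - x)) - t * c1 - t ^ 2 * c2 with hψ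
  have hψd : ∀ t : ℝ, HasDerivAt ψ
      (⟪f' (x + t • (y - x)), y - x⟫ - c1 - 2 * t * c2) t := by
    intro t
    have h1 := aux_line_deriv f f' hgrad x y t
    have h2 : HasDerivAt (fun t : ℝ => t * c1) c1 t := by
      simpa using (hasDerivAt_id t).mul_const c1
    have h3 : HasDerivAt (fun t : ℝ => t ^ 2 * c2) (2 * t * c2) t := by
      simpa using (hasDerivAt_pow 2 t).mul_const c2
    exact (h1.sub h2).sub h3
  have hanti : AntitoneOn ψ (Set.Icc (0:ℝ) 1) := by
    apply antitoneOn_of_deriv_nonpos (convex_Icc 0 1)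
    · exact (fun t _ => ((hψd t).differentiableAt).continuousAt.continuousWithinAt)
    · exact fun t _ => ((hψd t).differentiableAt).differentiableWithinAt
    · intro t ht
      rw [interior_Icc] at ht
      rw [(hψd t).deriv]
      have hsub : ⟪f' (x + t • (y - x)), y - x⟫ - c1 = ⟪f' (x + t • (y - x)) - f' x, y - x⟫ := by
        rw [inner_sub_left]
      have hcs : ⟪f' (x + t • (y - x)) - f' x, y - x⟫
          ≤ ‖f' (x + t • (y - x)) - f' x‖ * ‖y - x‖ := real_inner_le_norm _ _
      have hl : ‖f' (x + t • (y - x)) - f' x‖ ≤ L * (t * ‖y - x‖) := by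
        have := hlip (x + t • (y - x)) x
        simpa [norm_smul, abs_of_pos ht.1] using this
      have : ⟪f' (x + t • (y - x)) - f' x, y - x⟫ ≤ 2 * t * c2 := by
        calc _ ≤ ‖f' (x + t • (y - x)) - f' x‖ * ‖y - x‖ := hcs
          _ ≤ L * (t * ‖y - x‖) * ‖y - x‖ := by
              exact mul_le_mul_of_nonneg_right hl (norm_nonneg _)
          _ = 2 * t * c2 := by rw [hc2]; ring
      linarith
  have h01 : (0:ℝ) ∈ Set.Icc (0:ℝ) 1 := by norm_num
  have h11 : (1:ℝ) ∈ Set.Icc (0:ℝ) 1 := by norm_num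
  have := hanti h01 h11 (by norm_num)
  have hψ0 : ψ 0 = f x := by simp [hψ]
  have hψ1 : ψ 1 = f y - c1 - c2 := by simp [hψ]
  rw [hψ0, hψ1] at this
  linarith


-- a ≤ b from a² ≤ b², both nonneg
lemma aux_le_of_sq_le {a b : ℝ} (ha : 0 ≤ a) (hb : 0 ≤ b) (h : a^2 ≤ b^2) : a ≤ b := by
  nlinarith

lemma aux_sched (δ u b : ℝ) (hδ0 : 0 < δ) (hδ1 : δ ≤ 1) (hu : δ + 2 ≤ u) (hb : 0 < b) :
    (1 - δ * (2 / u)) * (b / Real.sqrt (u - 1)) ≤ b / Real.sqrt (u + δ - 1) := by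
  have hu0 : (0:ℝ) < u := by linarith
  have h1 : (0:ℝ) < u - 1 := by linarith
  have h2 : (0:ℝ) < u + δ - 1 := by linarith
  set s := Real.sqrt (u - 1) with hs
  set r := Real.sqrt (u + δ - 1) with hr
  have hs0 : 0 < s := Real.sqrt_pos.mpr h1
  have hr0 : 0 < r := Real.sqrt_pos.mpr h2
  have hs2 : s ^ 2 = u - 1 := Real.sq_sqrt h1.le
  have hr2 : r ^ 2 = u + δ - 1 := Real.sq_sqrt h2.le
  have hfac : 1 - δ * (2 / u) = (u - 2 * δ) / u := by field_simp
  rw [hfac, div_mul_div_comm, div_le_div_iff₀ (by positivity) hr0]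
  have key : (u - 2 * δ) * r ≤ u * s := by
    apply aux_le_of_sq_le (by nlinarith) (by positivity)
    have : ((u - 2*δ) * r)^2 = (u - 2*δ)^2 * (u + δ - 1) := by rw [mul_pow, hr2]
    rw [this, mul_pow, hs2]
    nlinarith [mul_pos hδ0 (show (0:ℝ) < 3*u^2 - 4*u + 4*δ - 4*δ^2 by nlinarith [sq_nonneg (u-2)])]
  calc (u - 2*δ) * b * r = b * ((u - 2*δ) * r) := by ring
    _ ≤ b * (u * s) := by exact mul_le_mul_of_nonneg_left key hb.le
    _ = b * (u * s) := rfl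

lemma aux_sqrt_step (δ u : ℝ) (hδ0 : 0 < δ) (hδ1 : δ ≤ 1) (hu : δ + 2 ≤ u) :
    (1 - δ * (2 / u)) * ((2 / δ) / Real.sqrt u) + (2 / u ^ 2) * Real.sqrt (u + δ - 1)
      ≤ (2 / δ) / Real.sqrt (u + δ) := by
  have hu0 : (0:ℝ) < u := by linarith
  have h2 : (0:ℝ) < u + δ := by linarith
  set s := Real.sqrt u with hs
  set t := Real.sqrt (u + δ) with ht
  have hs0 : 0 < s := Real.sqrt_pos.mpr hu0
  have ht0 : 0 < t := Real.sqrt_pos.mpr h2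
  have hs2 : s ^ 2 = u := Real.sq_sqrt hu0.le
  have ht2 : t ^ 2 = u + δ := Real.sq_sqrt h2.le
  have hr : Real.sqrt (u + δ - 1) ≤ s := Real.sqrt_le_sqrt (by linarith)
  have hu2δ : 0 ≤ u - 2 * δ := by linarith
  -- bound second term : (2/u²)·√(u+δ-1) ≤ (2/δ)·δ/(u·s)
  have hterm2 : (2 / u ^ 2) * Real.sqrt (u + δ - 1) ≤ 2 / (u * s) := by
    have : (2 / u ^ 2) * Real.sqrt (u + δ - 1) ≤ (2 / u ^ 2) * s :=
      mul_le_mul_of_nonneg_left hr (by positivity)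
    refine le_trans this (le_of_eq ?_)
    rw [div_mul_eq_mul_div, div_eq_div_iff (by positivity) (by positivity)]
    linear_combination (2 * u) * hs2
  have hterm1 : (1 - δ * (2 / u)) * ((2 / δ) / s) = (2 / δ) * ((u - 2 * δ) / (u * s)) := by
    field_simp
  have hkey : (u - δ) * t ≤ u * s := by
    apply aux_le_of_sq_le (by nlinarith) (by positivity)
    rw [mul_pow, mul_pow, hs2, ht2]
    nlinarith [mul_pos hδ0 (mul_pos hu0 hδ0), mul_pos hu0 (mul_pos hu0 hδ0)]
  have hmain : (2 / δ) * ((u - δ) / (u * s)) ≤ (2 / δ) / t := by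
    rw [← mul_div_assoc, div_le_div_iff₀ (by positivity) ht0]
    calc 2 / δ * (u - δ) * t = (2/δ) * ((u - δ) * t) := by ring
      _ ≤ (2/δ) * (u * s) := mul_le_mul_of_nonneg_left hkey (by positivity)
      _ = 2 / δ * (u * s) := by ring
  have hsum : (2 / δ) * ((u - 2*δ) / (u * s)) + 2 / (u * s)
      = (2 / δ) * ((u - δ) / (u * s)) := by
    field_simp; ring
  linarith [hterm2, hmain, hterm1.le, hterm1.ge, hsum.le, hsum.ge]

lemma aux_part1 (δ u M Eε : ℝ) (hδ0 : 0 < δ) (hδ1 : δ ≤ 1) (hu : δ + 2 ≤ u)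
    (hM : 0 ≤ M) (hE : 0 ≤ Eε) :
    (1 - δ * (2 / u)) * ((2 / δ) * ((M + δ * Eε) / u)) + (2 / u ^ 2) * M
      ≤ (2 / δ) * ((M + δ * Eε) / (u + δ)) := by
  have hu0 : (0:ℝ) < u := by linarith
  have h2 : (0:ℝ) < u + δ := by linarith
  rw [← sub_nonneg]
  have e : (2 / δ) * ((M + δ * Eε) / (u + δ))
      - ((1 - δ * (2 / u)) * ((2 / δ) * ((M + δ * Eε) / u)) + (2 / u ^ 2) * M)
      = (2 * δ * (M * δ + δ * Eε * (u + 2 * δ))) / (δ * u ^ 2 * (u + δ)) := by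
    field_simp
    ring
  rw [e]
  apply div_nonneg _ (by positivity)
  nlinarith [mul_nonneg hM hδ0.le, mul_nonneg (mul_nonneg hδ0.le hE) (by linarith : (0:ℝ) ≤ u + 2 * δ)]

lemma aux_step (δ u M Q Eε b : ℝ) (hδ0 : 0 < δ) (hδ1 : δ ≤ 1) (hu : δ + 2 ≤ u)
    (hM : 0 ≤ M) (hQ : 0 ≤ Q) (hE : 0 ≤ Eε) (hb : 0 < b) :
    (1 - δ * (2 / u)) * ((2 / δ) * ((M + δ * Eε) / u + Q / (b * Real.sqrt u)))
        + (2 / u ^ 2) * (M + Q * Real.sqrt (u + δ - 1) / b)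
      ≤ (2 / δ) * ((M + δ * Eε) / (u + δ) + Q / (b * Real.sqrt (u + δ))) := by
  have h1 := aux_part1 δ u M Eε hδ0 hδ1 hu hM hE
  have h2 := aux_sqrt_step δ u hδ0 hδ1 hu
  have h2' := mul_le_mul_of_nonneg_left h2 (show (0:ℝ) ≤ Q / b by positivity)
  have hu0 : (0:ℝ) < u := by linarith
  have hs0 : 0 < Real.sqrt u := Real.sqrt_pos.mpr hu0
  have ht0 : 0 < Real.sqrt (u + δ) := Real.sqrt_pos.mpr (by linarith)
  have e1 : (1 - δ * (2 / u)) * ((2 / δ) * ((M + δ * Eε) / u + Q / (b * Real.sqrt u)))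
        + (2 / u ^ 2) * (M + Q * Real.sqrt (u + δ - 1) / b)
      = ((1 - δ * (2 / u)) * ((2 / δ) * ((M + δ * Eε) / u)) + (2 / u ^ 2) * M)
        + (Q / b) * ((1 - δ * (2 / u)) * ((2 / δ) / Real.sqrt u)
            + (2 / u ^ 2) * Real.sqrt (u + δ - 1)) := by
    field_simp
    ring
  have e2 : (2 / δ) * ((M + δ * Eε) / (u + δ) + Q / (b * Real.sqrt (u + δ)))
      = (2 / δ) * ((M + δ * Eε) / (u + δ)) + (Q / b) * ((2 / δ) / Real.sqrt (u + δ)) := by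
    field_simp
  rw [e1, e2]
  exact add_le_add h1 h2'

lemma aux_base (δ M Q Eε b : ℝ) (hδ0 : 0 < δ) (hδ1 : δ ≤ 1)
    (hM : 0 ≤ M) (hQ : 0 ≤ Q) (hE : 0 ≤ Eε) (hb : 0 < b) :
    (1 - δ) * Eε + (M + Q * Real.sqrt (δ + 1) / b) / 2
      ≤ (2 / δ) * ((M + δ * Eε) / (δ + 2) + Q / (b * Real.sqrt (δ + 2))) := by
  have h2 : (0:ℝ) < δ + 2 := by linarith
  set s1 := Real.sqrt (δ + 1) with hs1
  set s2 := Real.sqrt (δ + 2) with hs2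
  have hs10 : 0 ≤ s1 := Real.sqrt_nonneg _
  have hs20 : 0 < s2 := Real.sqrt_pos.mpr h2
  have hs1sq : s1 ^ 2 = δ + 1 := Real.sq_sqrt (by linarith)
  have hs2sq : s2 ^ 2 = δ + 2 := Real.sq_sqrt h2.le
  have hpart1 : (1 - δ) * Eε + M / 2 ≤ (2 / δ) * ((M + δ * Eε) / (δ + 2)) := by
    rw [← sub_nonneg]
    have e : (2 / δ) * ((M + δ * Eε) / (δ + 2)) - ((1 - δ) * Eε + M / 2)
        = ((4 - δ * (δ + 2)) * M / 2 + (2 - (1 - δ) * (δ + 2)) * δ * Eε) / (δ * (δ + 2)) := by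
      field_simp
      ring
    rw [e]
    apply div_nonneg _ (by positivity)
    have c1 : 0 ≤ 4 - δ * (δ + 2) := by nlinarith
    have c2 : 0 ≤ 2 - (1 - δ) * (δ + 2) := by nlinarith
    positivity
  have hpart2 : Q * s1 / b / 2 ≤ (2 / δ) * (Q / (b * s2)) := by
    have hprod : (s1 * s2) ^ 2 = (δ + 1) * (δ + 2) := by rw [mul_pow, hs1sq, hs2sq]
    have hkey : δ * (s1 * s2) ≤ 4 := by
      nlinarith [hprod, sq_nonneg (s1 * s2 - 5/2), mul_nonneg hs10 hs20.le]
    rw [← sub_nonneg]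
    have e : (2 / δ) * (Q / (b * s2)) - Q * s1 / b / 2
        = (Q * (4 - δ * (s1 * s2))) / (2 * δ * b * s2) := by
      field_simp
      ring
    rw [e]
    apply div_nonneg _ (by positivity)
    exact mul_nonneg hQ (by linarith)
  have hsplit : (1 - δ) * Eε + (M + Q * s1 / b) / 2
      = ((1 - δ) * Eε + M / 2) + Q * s1 / b / 2 := by ring
  rw [hsplit, mul_add]
  exact add_le_add hpart1 hpart2
set_option maxHeartbeats 2000000 in
theorem stmt7
    (n d : ℕ)
    (X : Set (EuclideanSpace ℝ (Fin n)))
    (hX_ne : X.Nonempty) (hX_cpt : IsCompact X) (hX_cvx : Convex ℝ X)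
    (f : EuclideanSpace ℝ (Fin n) → ℝ)
    (f' : EuclideanSpace ℝ (Fin n) → EuclideanSpace ℝ (Fin n))
    (hf_cvx : ConvexOn ℝ Set.univ f)
    (hf_grad : ∀ x, HasGradientAt f (f' x) x)
    (L_f : ℝ) (hLf : 0 ≤ L_f)
    (hf'_lip : ∀ x y, ‖f' x - f' y‖ ≤ L_f * ‖x - y‖)
    (A : EuclideanSpace ℝ (Fin n) →L[ℝ] EuclideanSpace ℝ (Fin d))
    (g : EuclideanSpace ℝ (Fin d) → ℝ)
    (hg_cvx : ConvexOn ℝ Set.univ g)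
    (L_g : ℝ) (hLg : 0 < L_g)
    (hg_lip : ∀ z₁ z₂, |g z₁ - g z₂| ≤ L_g * ‖z₁ - z₂‖)
    (prox : ℝ → EuclideanSpace ℝ (Fin d) → EuclideanSpace ℝ (Fin d))
    (hprox : ∀ β, 0 < β → ∀ z y, g (prox β z) + ‖z - prox β z‖ ^ 2 / (2 * β)
        ≤ g y + ‖z - y‖ ^ 2 / (2 * β))
    (gβ : ℝ → EuclideanSpace ℝ (Fin d) → ℝ)
    (hgβ : ∀ β z, gβ β z = ⨅ y : EuclideanSpace ℝ (Fin d), (g y + ‖z - y‖ ^ 2 / (2 * β)))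
    (Fstar : ℝ)
    (hFstar : IsLeast ((fun x => f x + g (A x)) '' X) Fstar)
    (β₀ : ℝ) (hβ₀ : 0 < β₀)
    (δ : ℝ) (hδ0 : 0 < δ) (hδ1 : δ ≤ 1)
    (x s v : ℕ → EuclideanSpace ℝ (Fin n))
    (hx1 : x 1 ∈ X)
    (hv : ∀ k, 1 ≤ k → v k = (β₀ / Real.sqrt (δ * (k:ℝ) + 1)) • f' (x k)
        + (ContinuousLinearMap.adjoint A) (A (x k) - prox (β₀ / Real.sqrt (δ * (k:ℝ) + 1)) (A (x k))))
    (hs_mem : ∀ k, 1 ≤ k → s k ∈ X)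
    (hlmo : ∀ k, 1 ≤ k → ⟪v k, s k - x k⟫ ≤ δ * ⨅ z ∈ X, ⟪v k, z - x k⟫)
    (hupd : ∀ k, 1 ≤ k → x (k + 1) = x k + (2 / (δ * ((k:ℝ) - 1) + 2)) • (s k - x k)) :
    ∀ k, 1 ≤ k →
      f (x (k + 1)) + gβ (β₀ / Real.sqrt (δ * (k:ℝ) + 1)) (A (x (k + 1))) - Fstar
        ≤ (2 / δ) * (((Metric.diam X) ^ 2 * L_f + δ * (f (x 1) + g (A (x 1)) - Fstar))
              / (δ * (k:ℝ) + 2)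
            + (Metric.diam X) ^ 2 * ‖A‖ ^ 2 / (β₀ * Real.sqrt (δ * (k:ℝ) + 2))) := by
  obtain ⟨xs, hxs_mem, hxs_eq⟩ := hFstar.1
  have hlb : ∀ y ∈ X, Fstar ≤ f y + g (A y) := fun y hy => hFstar.2 ⟨y, hy, rfl⟩
  set D := Metric.diam X with hDd
  set M := D ^ 2 * L_f with hMd
  set Q := D ^ 2 * ‖A‖ ^ 2 with hQd
  set EE := f (x 1) + g (A (x 1)) - Fstar with hEEd
  have hD0 : 0 ≤ D := Metric.diam_nonneg
  have hM : 0 ≤ M := by positivity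
  have hQ : 0 ≤ Q := by positivity
  have hEE : 0 ≤ EE := by have := hlb (x 1) hx1; rw [hEEd]; linarith
  have hdiam : ∀ a ∈ X, ∀ b ∈ X, ‖a - b‖ ≤ D := by
    intro a ha b hb
    have := Metric.dist_le_diam_of_mem hX_cpt.isBounded ha hb
    rwa [dist_eq_norm] at this
  -- envelope basic facts
  have hgle2 : ∀ β, 0 < β → ∀ z y, gβ β z ≤ g y + ‖z - y‖ ^ 2 / (2 * β) := by
    intro β hβ z y
    rw [hgβ]
    exact ciInf_le ⟨g (prox β z) + ‖z - prox β z‖ ^ 2 / (2 * β),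
      by rintro t ⟨y', rfl⟩; exact hprox β hβ z y'⟩ y
  have hme : ∀ β, 0 < β → ∀ z, gβ β z = g (prox β z) + ‖z - prox β z‖ ^ 2 / (2 * β) := by
    intro β hβ z
    refine le_antisymm (hgle2 β hβ z (prox β z)) ?_
    rw [hgβ]
    exact le_ciInf (fun y => hprox β hβ z y)
  have hgle : ∀ β, 0 < β → ∀ z, gβ β z ≤ g z := by
    intro β hβ z
    have := hgle2 β hβ z z
    simpa using this
  -- membership
  have hmem : ∀ k, 1 ≤ k → x k ∈ X := by
    intro k hk
    induction k, hk using Nat.le_induction with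
    | base => exact hx1
    | succ k hk ih =>
      rw [hupd k hk]
      have hk1 : (1:ℝ) ≤ (k:ℝ) := by exact_mod_cast hk
      have hden : 0 < δ * ((k:ℝ) - 1) + 2 := by nlinarith
      have h0 : 0 ≤ 2 / (δ * ((k:ℝ) - 1) + 2) := by positivity
      have h1 : 2 / (δ * ((k:ℝ) - 1) + 2) ≤ 1 := by
        rw [div_le_one hden]; nlinarith
      have hcvx := hX_cvx ih (hs_mem k hk) (by linarith : (0:ℝ) ≤ 1 - 2 / (δ * ((k:ℝ) - 1) + 2))
        h0 (by ring)
      have he : (1 - 2 / (δ * ((k:ℝ) - 1) + 2)) • x k + (2 / (δ * ((k:ℝ) - 1) + 2)) • s k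
          = x k + (2 / (δ * ((k:ℝ) - 1) + 2)) • (s k - x k) := by module
      rwa [he] at hcvx
  -- the per-step inequality
  have hstep : ∀ k, 1 ≤ k →
      f (x (k+1)) + gβ (β₀ / Real.sqrt (δ * (k:ℝ) + 1)) (A (x (k+1))) - Fstar
        ≤ (1 - δ * (2 / (δ * ((k:ℝ) - 1) + 2)))
              * (f (x k) + gβ (β₀ / Real.sqrt (δ * (k:ℝ) + 1)) (A (x k)) - Fstar)
          - δ * (2 / (δ * ((k:ℝ) - 1) + 2))
              * ‖A (x k) - prox (β₀ / Real.sqrt (δ * (k:ℝ) + 1)) (A (x k))‖ ^ 2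
              / (2 * (β₀ / Real.sqrt (δ * (k:ℝ) + 1)))
          + (2 / (δ * ((k:ℝ) - 1) + 2)) ^ 2
              * (M + Q / (β₀ / Real.sqrt (δ * (k:ℝ) + 1))) / 2 := by
    intro k hk
    have hxk := hmem k hk
    have hsk := hs_mem k hk
    have hk1 : (1:ℝ) ≤ (k:ℝ) := by exact_mod_cast hk
    set β := β₀ / Real.sqrt (δ * (k:ℝ) + 1) with hβd
    have hsq : 0 < Real.sqrt (δ * (k:ℝ) + 1) := Real.sqrt_pos.mpr (by nlinarith)
    have hβp : 0 < β := div_pos hβ₀ hsq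
    set η := 2 / (δ * ((k:ℝ) - 1) + 2) with hηd
    have hden : 0 < δ * ((k:ℝ) - 1) + 2 := by nlinarith
    have hη0 : 0 < η := by positivity
    have hη1 : η ≤ 1 := by rw [hηd, div_le_one hden]; nlinarith
    set z := A (x k) with hz
    set p := prox β z with hp
    set dd := s k - x k with hdd
    have hq1 : ‖dd‖ ≤ D := hdiam _ hsk _ hxk
    have hq2 : ‖A dd‖ ≤ ‖A‖ * D :=
      le_trans (A.le_opNorm dd) (mul_le_mul_of_nonneg_left hq1 (norm_nonneg A))
    have hxk1 : x (k+1) = x k + η • dd := hupd k hk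
    have hdiff : x (k+1) - x k = η • dd := by rw [hxk1]; abel
    have hAdiff : A (x (k+1)) - z = η • A dd := by
      rw [hz, ← map_sub, hdiff, map_smul]
    -- F1 : smoothness of f
    have F1 : f (x (k+1)) ≤ f (x k) + η * ⟪f' (x k), dd⟫ + L_f * (η * ‖dd‖) ^ 2 / 2 := by
      have h := aux_descent_f f f' hf_grad L_f hLf hf'_lip (x k) (x (k+1))
      rw [hdiff, real_inner_smul_right, norm_smul, Real.norm_eq_abs, abs_of_pos hη0] at h
      exact h
    -- F2 : smoothness of the envelope
    have F2 : gβ β (A (x (k+1))) ≤ gβ β z + η * ⟪z - p, A dd⟫ / β + (η * ‖A dd‖) ^ 2 / (2 * β) := by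
      have h0 : gβ β (A (x (k+1))) ≤ g p + ‖A (x (k+1)) - p‖ ^ 2 / (2 * β) := hgle2 β hβp _ p
      have h := aux_env_descent g hβp z (A (x (k+1))) p
      rw [hAdiff, real_inner_smul_right, norm_smul, Real.norm_eq_abs, abs_of_pos hη0] at h
      have hmz : gβ β z = g p + ‖z - p‖ ^ 2 / (2 * β) := hme β hβp z
      calc gβ β (A (x (k+1))) ≤ g p + ‖A (x (k+1)) - p‖ ^ 2 / (2 * β) := h0
        _ ≤ g p + ‖z - p‖ ^ 2 / (2 * β) + η * ⟪z - p, A dd⟫ / β + (η * ‖A dd‖) ^ 2 / (2 * β) := by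
            have : ⟪z - p, A dd⟫ * η / β = η * ⟪z - p, A dd⟫ / β := by ring
            linarith [h]
        _ = gβ β z + η * ⟪z - p, A dd⟫ / β + (η * ‖A dd‖) ^ 2 / (2 * β) := by rw [hmz]
    -- the inexact oracle / convexity bound
    have hv' : v k = β • f' (x k) + (ContinuousLinearMap.adjoint A) (z - p) := by
      rw [hp, hz, hβd]; exact hv k hk
    have hvd : ⟪v k, dd⟫ = β * ⟪f' (x k), dd⟫ + ⟪z - p, A dd⟫ := by
      rw [hv', inner_add_left, real_inner_smul_left, ContinuousLinearMap.adjoint_inner_left]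
    have hvs : ⟪v k, xs - x k⟫ = β * ⟪f' (x k), xs - x k⟫ + ⟪z - p, A xs - z⟫ := by
      rw [hv', inner_add_left, real_inner_smul_left, ContinuousLinearMap.adjoint_inner_left,
        map_sub, ← hz]
    have hbdd : BddBelow (Set.range fun z' => ⨅ _ : z' ∈ X, ⟪v k, z' - x k⟫) := by
      have hcont : ContinuousOn (fun z' : EuclideanSpace ℝ (Fin n) => ⟪v k, z' - x k⟫) X :=
        (Continuous.inner continuous_const (continuous_id.sub continuous_const)).continuousOn
      obtain ⟨z0, hz0X, hmin⟩ := hX_cpt.exists_isMinOn hX_ne hcont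
      have hz0 : ∀ z' ∈ X, ⟪v k, z0 - x k⟫ ≤ ⟪v k, z' - x k⟫ := fun z' hz' => hmin hz'
      refine ⟨min ⟪v k, z0 - x k⟫ 0, ?_⟩
      rintro t ⟨z', rfl⟩
      dsimp only
      by_cases hz' : z' ∈ X
      · rw [ciInf_pos hz']
        exact le_trans (min_le_left _ _) (hz0 z' hz')
      · rw [ciInf_neg hz', Real.sInf_empty]
        exact min_le_right _ _
    have hinfle : (⨅ z' ∈ X, ⟪v k, z' - x k⟫) ≤ ⟪v k, xs - x k⟫ :=
      le_trans (ciInf_le hbdd xs) (le_of_eq (ciInf_pos hxs_mem))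
    have hlmo' : ⟪v k, dd⟫ ≤ δ * ⟪v k, xs - x k⟫ := by
      rw [hdd]
      exact le_trans (hlmo k hk) (mul_le_mul_of_nonneg_left hinfle hδ0.le)
    have F3 : β * ⟪f' (x k), dd⟫ + ⟪z - p, A dd⟫
        ≤ δ * (β * ⟪f' (x k), xs - x k⟫ + ⟪z - p, A xs - z⟫) := by
      rw [← hvd, ← hvs]; exact hlmo'
    have F4 : ⟪f' (x k), xs - x k⟫ ≤ f xs - f (x k) :=
      aux_grad_convex f f' hf_cvx hf_grad (x k) xs
    have F5 : ⟪z - p, A xs - z⟫ ≤ β * (g (A xs) - gβ β z) - ‖z - p‖ ^ 2 / 2 := by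
      have h := aux_star g hg_cvx hβp z p (fun y => hprox β hβp z y) (A xs)
      rwa [← hme β hβp z] at h
    -- combine the linear parts
    have hc1 : η * ⟪f' (x k), dd⟫ + η * ⟪z - p, A dd⟫ / β
        ≤ δ * η * (Fstar - (f (x k) + gβ β z)) - δ * η * ‖z - p‖ ^ 2 / (2 * β) := by
      have hsum : β * ⟪f' (x k), dd⟫ + ⟪z - p, A dd⟫
          ≤ δ * β * (Fstar - (f (x k) + gβ β z)) - δ * ‖z - p‖ ^ 2 / 2 := by
        have h4 := mul_le_mul_of_nonneg_left F4 hβp.le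
        have h6 : β * ⟪f' (x k), xs - x k⟫ + ⟪z - p, A xs - z⟫
            ≤ β * (Fstar - (f (x k) + gβ β z)) - ‖z - p‖ ^ 2 / 2 := by
          have : β * (f xs - f (x k)) + (β * (g (A xs) - gβ β z) - ‖z - p‖ ^ 2 / 2)
              = β * (Fstar - (f (x k) + gβ β z)) - ‖z - p‖ ^ 2 / 2 := by
            rw [← hxs_eq]; ring
          linarith [F5]
        calc β * ⟪f' (x k), dd⟫ + ⟪z - p, A dd⟫ ≤ _ := F3
          _ ≤ δ * (β * (Fstar - (f (x k) + gβ β z)) - ‖z - p‖ ^ 2 / 2) :=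
              mul_le_mul_of_nonneg_left h6 hδ0.le
          _ = δ * β * (Fstar - (f (x k) + gβ β z)) - δ * ‖z - p‖ ^ 2 / 2 := by ring
      have h := mul_le_mul_of_nonneg_left hsum (by positivity : (0:ℝ) ≤ η / β)
      calc η * ⟪f' (x k), dd⟫ + η * ⟪z - p, A dd⟫ / β
          = (η / β) * (β * ⟪f' (x k), dd⟫ + ⟪z - p, A dd⟫) := by field_simp
        _ ≤ (η / β) * (δ * β * (Fstar - (f (x k) + gβ β z)) - δ * ‖z - p‖ ^ 2 / 2) := h
        _ = δ * η * (Fstar - (f (x k) + gβ β z)) - δ * η * ‖z - p‖ ^ 2 / (2 * β) := by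
            field_simp
    -- quadratic terms
    have hquad1 : L_f * (η * ‖dd‖) ^ 2 / 2 ≤ L_f * (η * D) ^ 2 / 2 := by
      have : (η * ‖dd‖) ^ 2 ≤ (η * D) ^ 2 := by
        nlinarith [mul_le_mul hq1 hq1 (norm_nonneg dd) hD0, sq_nonneg η, hη0.le]
      nlinarith
    have hquad2 : (η * ‖A dd‖) ^ 2 / (2 * β) ≤ (η * (‖A‖ * D)) ^ 2 / (2 * β) := by
      have h2β : (0:ℝ) < 2 * β := by linarith
      have hnum : (η * ‖A dd‖) ^ 2 ≤ (η * (‖A‖ * D)) ^ 2 := by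
        nlinarith [mul_le_mul hq2 hq2 (norm_nonneg (A dd)) (by positivity : (0:ℝ) ≤ ‖A‖ * D),
          sq_nonneg η, hη0.le]
      exact (div_le_div_iff_of_pos_right h2β).mpr hnum
    have hfinal : (1 - δ * η) * (f (x k) + gβ β z - Fstar)
          - δ * η * ‖z - p‖ ^ 2 / (2 * β) + η ^ 2 * (M + Q / β) / 2
        = (f (x k) + gβ β z) + (δ * η * (Fstar - (f (x k) + gβ β z))
            - δ * η * ‖z - p‖ ^ 2 / (2 * β)) + L_f * (η * D) ^ 2 / 2
            + (η * (‖A‖ * D)) ^ 2 / (2 * β) - Fstar := by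
      rw [hMd, hQd]; field_simp; ring
    rw [hfinal]
    linarith [F1, F2, hc1, hquad1, hquad2]
  intro k hk
  induction k, hk using Nat.le_induction with
  | base =>
    have h := hstep 1 le_rfl
    have hc1 : ((1:ℕ):ℝ) = 1 := Nat.cast_one
    rw [hc1] at h ⊢
    have he : δ * ((1:ℝ) - 1) + 2 = 2 := by ring
    have e22 : (2:ℝ) / 2 = 1 := by norm_num
    have e1 : δ * (1:ℝ) + 1 = δ + 1 := by ring
    have e2 : δ * (1:ℝ) + 2 = δ + 2 := by ring
    rw [he, e22, e1, mul_one, one_pow, one_mul] at h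
    rw [e1, e2]
    have hsq1 : 0 < Real.sqrt (δ + 1) := Real.sqrt_pos.mpr (by linarith)
    have hβ1 : 0 < β₀ / Real.sqrt (δ + 1) := div_pos hβ₀ hsq1
    have hP : f (x 1) + gβ (β₀ / Real.sqrt (δ + 1)) (A (x 1)) - Fstar ≤ EE := by
      have := hgle (β₀ / Real.sqrt (δ + 1)) hβ1 (A (x 1))
      rw [hEEd]; linarith
    have hQβ : Q / (β₀ / Real.sqrt (δ + 1)) = Q * Real.sqrt (δ + 1) / β₀ :=
      div_div_eq_mul_div Q β₀ (Real.sqrt (δ + 1))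
    have hbase := aux_base δ M Q EE β₀ hδ0 hδ1 hM hQ hEE hβ₀
    have h1δ : (0:ℝ) ≤ 1 - δ := by linarith
    have hmono : (1 - δ) * (f (x 1) + gβ (β₀ / Real.sqrt (δ + 1)) (A (x 1)) - Fstar)
        ≤ (1 - δ) * EE := mul_le_mul_of_nonneg_left hP h1δ
    have hdrop : 0 ≤ δ * ‖A (x 1) - prox (β₀ / Real.sqrt (δ + 1)) (A (x 1))‖ ^ 2
        / (2 * (β₀ / Real.sqrt (δ + 1))) := by positivity
    linarith [h, hmono, hdrop, hbase, hQβ.le, hQβ.ge]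
  | succ k hk ih =>
    have hk1 : (1:ℝ) ≤ (k:ℝ) := by exact_mod_cast hk
    push_cast at ih ⊢
    set u := δ * (k:ℝ) + 2 with hud
    have hu : δ + 2 ≤ u := by rw [hud]; nlinarith
    have hu0 : (0:ℝ) < u := by linarith
    have h := hstep (k+1) (by omega)
    push_cast at h
    have he1 : δ * ((k:ℝ) + 1 - 1) + 2 = u := by rw [hud]; ring
    have he2 : δ * ((k:ℝ) + 1) + 1 = u + δ - 1 := by rw [hud]; ring
    have he3 : δ * ((k:ℝ) + 1) + 2 = u + δ := by rw [hud]; ring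
    rw [he1, he2] at h
    rw [he2, he3]
    set β' := β₀ / Real.sqrt (u + δ - 1) with hβ'd
    set βp := β₀ / Real.sqrt (δ * (k:ℝ) + 1) with hβpd
    have hsq' : 0 < Real.sqrt (u + δ - 1) := Real.sqrt_pos.mpr (by nlinarith)
    have hsqp : 0 < Real.sqrt (δ * (k:ℝ) + 1) := Real.sqrt_pos.mpr (by nlinarith)
    have hβ'p : 0 < β' := div_pos hβ₀ hsq'
    have hβpp : 0 < βp := div_pos hβ₀ hsqp
    have hβ'le : β' ≤ βp := by
      rw [hβ'd, hβpd]
      exact (div_le_div_iff_of_pos_left hβ₀ hsq' hsqp).mpr (Real.sqrt_le_sqrt (by nlinarith))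
    set W := ‖A (x (k+1)) - prox β' (A (x (k+1)))‖ ^ 2 with hWd
    have hW0 : 0 ≤ W := by rw [hWd]; positivity
    have hbch : gβ β' (A (x (k+1))) ≤ gβ βp (A (x (k+1))) + (βp - β') * W / (2 * β' ^ 2) := by
      have hb := aux_beta g hg_cvx hβ'p hβ'le (A (x (k+1))) (prox β' (A (x (k+1))))
        (prox βp (A (x (k+1)))) (fun y => hprox β' hβ'p _ y)
      rw [← hme β' hβ'p _, ← hme βp hβpp _] at hb
      rw [hWd]
      exact hb
    have hschedraw := aux_sched δ u β₀ hδ0 hδ1 hu hβ₀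
    have e4 : u - 1 = δ * (k:ℝ) + 1 := by rw [hud]; ring
    rw [e4, ← hβpd, ← hβ'd] at hschedraw
    have hδη : δ * (2 / u) ≤ 1 := by
      have e : δ * (2 / u) = 2 * δ / u := by ring
      rw [e, div_le_one hu0]; linarith
    have h1a : (0:ℝ) ≤ 1 - δ * (2 / u) := by linarith
    have hcan : (1 - δ * (2 / u)) * ((βp - β') * W / (2 * β' ^ 2))
        ≤ δ * (2 / u) * W / (2 * β') := by
      have hc1 : (1 - δ * (2 / u)) * (βp - β') ≤ δ * (2 / u) * β' := by nlinarith [hschedraw]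
      have hc2 := mul_le_mul_of_nonneg_right hc1 (show (0:ℝ) ≤ W / (2 * β' ^ 2) by positivity)
      calc (1 - δ * (2 / u)) * ((βp - β') * W / (2 * β' ^ 2))
          = ((1 - δ * (2 / u)) * (βp - β')) * (W / (2 * β' ^ 2)) := by ring
        _ ≤ (δ * (2 / u) * β') * (W / (2 * β' ^ 2)) := hc2
        _ = δ * (2 / u) * W / (2 * β') := by field_simp
    have hquadeq : (2 / u) ^ 2 * (M + Q / β') / 2
        = 2 / u ^ 2 * (M + Q * Real.sqrt (u + δ - 1) / β₀) := by
      rw [hβ'd]; field_simp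
    have hstepfin := aux_step δ u M Q EE β₀ hδ0 hδ1 hu hM hQ hEE hβ₀
    have hmid : f (x (k+1)) + gβ β' (A (x (k+1))) - Fstar
        ≤ 2 / δ * ((M + δ * EE) / u + Q / (β₀ * Real.sqrt u)) + (βp - β') * W / (2 * β' ^ 2) := by
      linarith [hbch, ih]
    have hmul := mul_le_mul_of_nonneg_left hmid h1a
    have hexpand : (1 - δ * (2 / u)) * (2 / δ * ((M + δ * EE) / u + Q / (β₀ * Real.sqrt u))
          + (βp - β') * W / (2 * β' ^ 2))
        = (1 - δ * (2 / u)) * (2 / δ * ((M + δ * EE) / u + Q / (β₀ * Real.sqrt u)))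
          + (1 - δ * (2 / u)) * ((βp - β') * W / (2 * β' ^ 2)) := by ring
    linarith [h, hmul, hcan, hstepfin, hquadeq.le, hquadeq.ge, hexpand.le, hexpand.ge]
end
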